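/- arXiv:2101.07501 — 4 statements merged into one kernel-verified Lean document; each statement's English description precedes it below -/
import Mathlib

section
/- Let Ω ⊂ ℝ² be a closed rectangular box with positive volume, let u : ℝ² → ℝ² be continuously differentiable on a neighborhood of Ω with div u = 0 on Ω and u = 0 on ∂Ω, let ε > 0 and π₁ > 0, and let D : ℝ² → ℝ be continuous with D(x) ≥ 1 for all x ∈ Ω. Then for every φ : ℝ² → ℝ continuously differentiable on a neighborhood of Ω, the bilinear form a^ε satisfies the coercivity estimate a^ε(φ,φ) ≥ ‖φ‖_ε², i.e. ∫_Ω (u·∇φ)φ dx + π₁ ∫_Ω D |∇φ|² dx + ε ∫_Ω φ² dx ≥ π₁ ∫_Ω |∇φ|² dx + ε ∫_Ω φ² dx. -/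
open MeasureTheory

noncomputable def eL2 : EuclideanSpace ℝ (Fin 2) ≃L[ℝ] (Fin 2 → ℝ) :=
  PiLp.continuousLinearEquiv 2 ℝ (fun _ : Fin 2 => ℝ)

theorem aux_interior (a b : Fin 2 → ℝ)
    (Ω : Set (EuclideanSpace ℝ (Fin 2)))
    (hΩ : Ω = {x : EuclideanSpace ℝ (Fin 2) | ∀ i, x i ∈ Set.Icc (a i) (b i)}) :
    interior Ω = {x : EuclideanSpace ℝ (Fin 2) | ∀ i, x i ∈ Set.Ioo (a i) (b i)} := by
  have hpi : interior (Set.pi Set.univ fun i => Set.Icc (a i) (b i) : Set (Fin 2 → ℝ))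
      = Set.pi Set.univ fun i => Set.Ioo (a i) (b i) := by
    rw [interior_pi_set Set.finite_univ]
    simp [interior_Icc]
  have h1 : Ω = eL2 ⁻¹' (Set.pi Set.univ fun i => Set.Icc (a i) (b i) : Set (Fin 2 → ℝ)) := by
    rw [hΩ]; ext x
    constructor
    · intro h i _
      exact h i
    · intro h i
      exact h i (Set.mem_univ i)
  rw [h1]
  rw [show interior (eL2 ⁻¹' (Set.pi Set.univ fun i => Set.Icc (a i) (b i) : Set (Fin 2 → ℝ)))
      = eL2 ⁻¹' interior (Set.pi Set.univ fun i => Set.Icc (a i) (b i) : Set (Fin 2 → ℝ)) from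
    (eL2.toHomeomorph.preimage_interior _).symm]
  rw [hpi]
  ext x
  constructor
  · intro h i
    exact h i (Set.mem_univ i)
  · intro h i _
    exact h i

theorem aux_closed (a b : Fin 2 → ℝ)
    (Ω : Set (EuclideanSpace ℝ (Fin 2)))
    (hΩ : Ω = {x : EuclideanSpace ℝ (Fin 2) | ∀ i, x i ∈ Set.Icc (a i) (b i)}) :
    IsClosed Ω := by
  have h1 : Ω = eL2 ⁻¹' (Set.pi Set.univ fun i => Set.Icc (a i) (b i) : Set (Fin 2 → ℝ)) := by
    rw [hΩ]; ext x
    constructor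
    · intro h i _
      exact h i
    · intro h i
      exact h i (Set.mem_univ i)
  rw [h1]
  exact (isClosed_set_pi fun i _ => isClosed_Icc).preimage eL2.continuous

theorem aux_key (a b : Fin 2 → ℝ) (hab : ∀ i, a i < b i)
    (Ω : Set (EuclideanSpace ℝ (Fin 2)))
    (hΩ : Ω = {x : EuclideanSpace ℝ (Fin 2) | ∀ i, x i ∈ Set.Icc (a i) (b i)})
    (U : Set (EuclideanSpace ℝ (Fin 2))) (hU : IsOpen U) (hΩU : Ω ⊆ U)
    (u : EuclideanSpace ℝ (Fin 2) → EuclideanSpace ℝ (Fin 2))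
    (hu : ContDiffOn ℝ 1 u U)
    (hdiv : ∀ x ∈ Ω, (∑ i, fderiv ℝ u x (EuclideanSpace.single i 1) i) = 0)
    (hubd : ∀ x ∈ frontier Ω, u x = 0)
    (V : Set (EuclideanSpace ℝ (Fin 2))) (hV : IsOpen V) (hΩV : Ω ⊆ V)
    (φ : EuclideanSpace ℝ (Fin 2) → ℝ)
    (hφ : ContDiffOn ℝ 1 φ V) :
    (∫ x in Ω, (inner ℝ (u x) (gradient φ x) : ℝ) * φ x) = 0 := by
  classical
  -- notation
  set ψ : (Fin 2 → ℝ) → ℝ := fun y => φ (eL2.symm y) with hψ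
  set w : (Fin 2 → ℝ) → (Fin 2 → ℝ) := fun y => eL2 (u (eL2.symm y)) with hw
  set F : (Fin 2 → ℝ) → (Fin 2 → ℝ) := fun y => (ψ y * ψ y) • w y with hF
  set φ' : (Fin 2 → ℝ) → (Fin 2 → ℝ) →L[ℝ] ℝ :=
    fun y => (fderiv ℝ φ (eL2.symm y)).comp
      (eL2.symm : (Fin 2 → ℝ) →L[ℝ] EuclideanSpace ℝ (Fin 2)) with hφ'
  set u' : (Fin 2 → ℝ) → (Fin 2 → ℝ) →L[ℝ] (Fin 2 → ℝ) :=
    fun y => ((eL2 : EuclideanSpace ℝ (Fin 2) →L[ℝ] (Fin 2 → ℝ)).comp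
        (fderiv ℝ u (eL2.symm y))).comp
      (eL2.symm : (Fin 2 → ℝ) →L[ℝ] EuclideanSpace ℝ (Fin 2)) with hu'
  set F' : (Fin 2 → ℝ) → (Fin 2 → ℝ) →L[ℝ] (Fin 2 → ℝ) :=
    fun y => (ψ y * ψ y) • u' y + (ψ y • φ' y + ψ y • φ' y).smulRight (w y) with hF'
  have hmem : ∀ y : Fin 2 → ℝ, y ∈ Set.Icc a b ↔ eL2.symm y ∈ Ω := by
    intro y
    rw [hΩ]
    simp only [Set.mem_Icc, Set.mem_setOf_eq, Pi.le_def]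
    constructor
    · rintro ⟨h1, h2⟩ i; exact ⟨h1 i, h2 i⟩
    · intro h; exact ⟨fun i => (h i).1, fun i => (h i).2⟩
  have hle : a ≤ b := fun i => (hab i).le
  -- differentiability transfers
  have hW : ∀ y : Fin 2 → ℝ, eL2.symm y ∈ U → eL2.symm y ∈ V → HasFDerivAt F (F' y) y := by
    intro y hyU hyV
    have hφy : HasFDerivAt φ (fderiv ℝ φ (eL2.symm y)) (eL2.symm y) :=
      ((hφ.differentiableOn one_ne_zero).differentiableAt (hV.mem_nhds hyV)).hasFDerivAt
    have huy : HasFDerivAt u (fderiv ℝ u (eL2.symm y)) (eL2.symm y) :=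
      ((hu.differentiableOn one_ne_zero).differentiableAt (hU.mem_nhds hyU)).hasFDerivAt
    have hψy : HasFDerivAt ψ (φ' y) y :=
      eL2.symm.comp_right_hasFDerivAt_iff.2 hφy
    have hcomp1 : HasFDerivAt (u ∘ ⇑eL2.symm)
        ((fderiv ℝ u (eL2.symm y)).comp
          (eL2.symm : (Fin 2 → ℝ) →L[ℝ] EuclideanSpace ℝ (Fin 2))) y :=
      eL2.symm.comp_right_hasFDerivAt_iff.2 huy
    have hwy : HasFDerivAt w (u' y) y := by
      have := eL2.comp_hasFDerivAt_iff.2 hcomp1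
      rw [← ContinuousLinearMap.comp_assoc] at this
      exact this
    exact (hψy.mul hψy).smul hwy

  have hclosed : IsClosed Ω := aux_closed a b Ω hΩ
  have hintΩ : interior Ω = {x : EuclideanSpace ℝ (Fin 2) | ∀ i, x i ∈ Set.Ioo (a i) (b i)} :=
    aux_interior a b Ω hΩ
  have hφco : ContinuousOn ψ (Set.Icc a b) :=
    hφ.continuousOn.comp eL2.symm.continuous.continuousOn (fun y hy => hΩV ((hmem y).1 hy))
  have huco : ContinuousOn (fun y => u (eL2.symm y)) (Set.Icc a b) :=
    hu.continuousOn.comp eL2.symm.continuous.continuousOn (fun y hy => hΩU ((hmem y).1 hy))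
  have hwco : ContinuousOn w (Set.Icc a b) := eL2.continuous.comp_continuousOn huco
  have Hc : ContinuousOn F (Set.Icc a b) := (hφco.mul hφco).smul hwco
  have Hd : ∀ y ∈ (Set.pi Set.univ fun i => Set.Ioo (a i) (b i)) \ (∅ : Set (Fin 2 → ℝ)),
      HasFDerivAt F (F' y) y := by
    intro y hy
    have h := hy.1
    rw [Set.mem_univ_pi] at h
    have h1 : y ∈ Set.Icc a b := ⟨fun i => (h i).1.le, fun i => (h i).2.le⟩
    have hy' := (hmem y).1 h1
    exact hW y (hΩU hy') (hΩV hy')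
  have hsingle : ∀ i : Fin 2,
      (eL2.symm : (Fin 2 → ℝ) →L[ℝ] EuclideanSpace ℝ (Fin 2)) (Pi.single i 1)
        = EuclideanSpace.single i (1:ℝ) := fun i => rfl
  have happ : ∀ (z : EuclideanSpace ℝ (Fin 2)) (i : Fin 2),
      ((eL2 : EuclideanSpace ℝ (Fin 2) →L[ℝ] (Fin 2 → ℝ)) z) i = z i := fun z i => rfl
  have hform : ∀ y : Fin 2 → ℝ, (∑ i, F' y (Pi.single i 1) i)
      = (ψ y * ψ y) * (∑ i, (fderiv ℝ u (eL2.symm y)) (EuclideanSpace.single i 1) i)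
        + (2 * ψ y) * (∑ i, (fderiv ℝ φ (eL2.symm y)) (EuclideanSpace.single i 1) * w y i) := by
    intro y
    have hsingle' : ∀ i : Fin 2, (⇑eL2.symm (Pi.single i 1) : EuclideanSpace ℝ (Fin 2))
        = EuclideanSpace.single i (1:ℝ) := fun i => rfl
    have happ' : ∀ (z : EuclideanSpace ℝ (Fin 2)) (i : Fin 2), (⇑eL2 z) i = z i :=
      fun z i => rfl
    have h1 : ∀ i : Fin 2, F' y (Pi.single i 1) i
        = (ψ y * ψ y) * ((fderiv ℝ u (eL2.symm y)) (EuclideanSpace.single i 1) i)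
          + (2 * ψ y) * ((fderiv ℝ φ (eL2.symm y)) (EuclideanSpace.single i 1) * w y i) := by
      intro i
      simp only [hF', hu', hφ', ContinuousLinearMap.add_apply, ContinuousLinearMap.coe_smul',
        Pi.smul_apply, ContinuousLinearMap.smulRight_apply, ContinuousLinearMap.comp_apply,
        ContinuousLinearEquiv.coe_coe, smul_eq_mul, Pi.add_apply, hsingle', happ']
      ring
    rw [Finset.sum_congr rfl fun i _ => h1 i, Finset.sum_add_distrib,
      ← Finset.mul_sum, ← Finset.mul_sum]
  have hufc : ContinuousOn (fun x => fderiv ℝ u x) U := hu.continuousOn_fderiv_of_isOpen hU le_rfl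
  have hφfc : ContinuousOn (fun x => fderiv ℝ φ x) V := hφ.continuousOn_fderiv_of_isOpen hV le_rfl
  have hufc' : ContinuousOn (fun y => fderiv ℝ u (eL2.symm y)) (Set.Icc a b) :=
    hufc.comp eL2.symm.continuous.continuousOn (fun y hy => hΩU ((hmem y).1 hy))
  have hφfc' : ContinuousOn (fun y => fderiv ℝ φ (eL2.symm y)) (Set.Icc a b) :=
    hφfc.comp eL2.symm.continuous.continuousOn (fun y hy => hΩV ((hmem y).1 hy))
  have hGco : ContinuousOn (fun y =>
      (ψ y * ψ y) * (∑ i, (fderiv ℝ u (eL2.symm y)) (EuclideanSpace.single i 1) i)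
        + (2 * ψ y) * (∑ i, (fderiv ℝ φ (eL2.symm y)) (EuclideanSpace.single i 1) * w y i))
      (Set.Icc a b) := by
    apply ContinuousOn.add
    · apply (hφco.mul hφco).mul
      apply continuousOn_finset_sum
      intro i _
      exact (PiLp.continuous_apply 2 (fun _ : Fin 2 => ℝ) i).comp_continuousOn
        ((ContinuousLinearMap.apply ℝ (EuclideanSpace ℝ (Fin 2))
          (EuclideanSpace.single i 1)).continuous.comp_continuousOn hufc')
    · apply (continuousOn_const.mul hφco).mul
      apply continuousOn_finset_sum
      intro i _
      exact ((ContinuousLinearMap.apply ℝ ℝ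
          (EuclideanSpace.single i 1)).continuous.comp_continuousOn hφfc').mul
        ((continuous_apply i).comp_continuousOn hwco)
  have hfun : (fun y => ∑ i, F' y (Pi.single i 1) i) = fun y =>
      (ψ y * ψ y) * (∑ i, (fderiv ℝ u (eL2.symm y)) (EuclideanSpace.single i 1) i)
        + (2 * ψ y) * (∑ i, (fderiv ℝ φ (eL2.symm y)) (EuclideanSpace.single i 1) * w y i) :=
    funext hform
  have Hi : IntegrableOn (fun y => ∑ i, F' y (Pi.single i 1) i) (Set.Icc a b) := by
    rw [hfun]
    exact hGco.integrableOn_compact isCompact_Icc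
  have hdt := MeasureTheory.integral_divergence_of_hasFDerivAt_off_countable
      (n := 1) a b hle F F' ∅ Set.countable_empty Hc Hd Hi
  have hfacezero : ∀ (i : Fin 2) (c : ℝ), (c = a i ∨ c = b i) →
      (∫ y in Set.Icc (a ∘ i.succAbove) (b ∘ i.succAbove), F (i.insertNth c y) i) = 0 := by
    intro i c hc
    rw [setIntegral_congr_fun measurableSet_Icc (g := fun _ => (0:ℝ)) ?_]
    · exact integral_zero _ _
    intro y hy
    have hymem : ∀ k, y k ∈ Set.Icc ((a ∘ i.succAbove) k) ((b ∘ i.succAbove) k) :=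
      fun k => ⟨hy.1 k, hy.2 k⟩
    have hIcc : ∀ j, (i.insertNth (α := fun _ => ℝ) c y) j ∈ Set.Icc (a j) (b j) := by
      intro j
      refine Fin.succAboveCases (α := fun j => (i.insertNth (α := fun _ => ℝ) c y) j ∈ Set.Icc (a j) (b j)) i ?_ ?_ j
      · show (i.insertNth (α := fun _ => ℝ) c y) i ∈ Set.Icc (a i) (b i)
        rw [Fin.insertNth_apply_same]
        rcases hc with h | h <;> subst h
        · exact ⟨le_rfl, (hab i).le⟩
        · exact ⟨(hab i).le, le_rfl⟩
      · intro k
        show (i.insertNth (α := fun _ => ℝ) c y) (i.succAbove k) ∈ Set.Icc (a (i.succAbove k)) (b (i.succAbove k))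
        rw [Fin.insertNth_apply_succAbove]
        exact hymem k
    have hmemΩ : eL2.symm (i.insertNth (α := fun _ => ℝ) c y) ∈ Ω := by rw [hΩ]; exact hIcc
    have hnotint : eL2.symm (i.insertNth (α := fun _ => ℝ) c y) ∉ interior Ω := by
      rw [hintΩ]
      intro hmem2
      have h2 := hmem2 i
      have h3 : (i.insertNth (α := fun _ => ℝ) c y) i ∈ Set.Ioo (a i) (b i) := h2
      rw [Fin.insertNth_apply_same] at h3
      rcases hc with h | h <;> subst h
      · exact lt_irrefl _ h3.1
      · exact lt_irrefl _ h3.2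
    have hfr : eL2.symm (i.insertNth (α := fun _ => ℝ) c y) ∈ frontier Ω := by
      rw [hclosed.frontier_eq]
      exact ⟨hmemΩ, hnotint⟩
    have hu0 : u (eL2.symm (i.insertNth (α := fun _ => ℝ) c y)) = 0 := hubd _ hfr
    show F (i.insertNth (α := fun _ => ℝ) c y) i = 0
    rw [hF]
    simp only [hw, hu0, map_zero, smul_zero, Pi.zero_apply]
  have hRHS0 : (∫ y in Set.Icc a b, ∑ i, F' y (Pi.single i 1) i) = 0 := by
    rw [hdt]
    apply Finset.sum_eq_zero
    intro i _
    rw [hfacezero i (b i) (Or.inr rfl), hfacezero i (a i) (Or.inl rfl), sub_zero]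
  have hinner : ∀ x : EuclideanSpace ℝ (Fin 2),
      (∑ i, (fderiv ℝ φ x) (EuclideanSpace.single i 1) * (u x i))
        = (inner ℝ (u x) (gradient φ x) : ℝ) := by
    intro x
    have hg : ∀ i : Fin 2, gradient φ x i = (fderiv ℝ φ x) (EuclideanSpace.single i 1) := by
      intro i
      have h1 : (inner ℝ (gradient φ x) (EuclideanSpace.single i (1:ℝ)) : ℝ)
          = (fderiv ℝ φ x) (EuclideanSpace.single i 1) :=
        InnerProductSpace.toDual_symm_apply
      rw [EuclideanSpace.inner_single_right] at h1
      simpa using h1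
    rw [PiLp.inner_apply]
    apply Finset.sum_congr rfl
    intro i _
    rw [hg i]
    simp [RCLike.inner_apply]
  have hg2 : ∀ y ∈ Set.Icc a b, (∑ i, F' y (Pi.single i 1) i)
      = 2 * ((inner ℝ (u (eL2.symm y)) (gradient φ (eL2.symm y)) : ℝ) * ψ y) := by
    intro y hy
    rw [hform y, hdiv _ ((hmem y).1 hy), mul_zero, zero_add]
    have h4 : (∑ i, (fderiv ℝ φ (eL2.symm y)) (EuclideanSpace.single i 1) * w y i)
        = (inner ℝ (u (eL2.symm y)) (gradient φ (eL2.symm y)) : ℝ) := hinner (eL2.symm y)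
    rw [h4]
    ring
  have hL : (∫ y in Set.Icc a b,
      (inner ℝ (u (eL2.symm y)) (gradient φ (eL2.symm y)) : ℝ) * ψ y) = 0 := by
    have h2 : (∫ y in Set.Icc a b,
        2 * ((inner ℝ (u (eL2.symm y)) (gradient φ (eL2.symm y)) : ℝ) * ψ y)) = 0 := by
      rw [← setIntegral_congr_fun measurableSet_Icc hg2]
      exact hRHS0
    rw [integral_const_mul] at h2
    linarith
  have hMP := EuclideanSpace.volume_preserving_symm_measurableEquiv_toLp (Fin 2)
  have hemb := (MeasurableEquiv.toLp 2 (Fin 2 → ℝ)).symm.measurableEmbedding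
  have hpre : (⇑(MeasurableEquiv.toLp 2 (Fin 2 → ℝ)).symm) ⁻¹' (Set.Icc a b) = Ω := by
    ext x
    rw [hΩ]
    constructor
    · intro h i; exact ⟨h.1 i, h.2 i⟩
    · intro h; exact ⟨fun i => (h i).1, fun i => (h i).2⟩
  have htrans := hMP.setIntegral_preimage_emb hemb
      (fun y => (inner ℝ (u (eL2.symm y)) (gradient φ (eL2.symm y)) : ℝ) * ψ y) (Set.Icc a b)
  rw [hpre] at htrans
  rw [← hL, ← htrans]
  rfl


theorem aux_box_eq (a b : Fin 2 → ℝ) (Ω : Set (EuclideanSpace ℝ (Fin 2)))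
    (hΩ : Ω = {x : EuclideanSpace ℝ (Fin 2) | ∀ i, x i ∈ Set.Icc (a i) (b i)}) :
    Ω = ((PiLp.continuousLinearEquiv 2 ℝ (fun _ : Fin 2 => ℝ)).symm '' Set.Icc a b) := by
  rw [hΩ]; ext x
  simp only [Set.mem_image, Set.mem_setOf_eq, Set.mem_Icc]
  constructor
  · intro h
    refine ⟨(PiLp.continuousLinearEquiv 2 ℝ (fun _ : Fin 2 => ℝ)) x, ?_,
      (PiLp.continuousLinearEquiv 2 ℝ (fun _ : Fin 2 => ℝ)).symm_apply_apply x⟩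
    exact ⟨fun i => (h i).1, fun i => (h i).2⟩
  · rintro ⟨y, hy, rfl⟩ i
    exact ⟨hy.1 i, hy.2 i⟩

/-- coercivity of `a^ε` w.r.t. `‖·‖_ε`: on a closed rectangular box
`Ω ⊂ ℝ²`, for a `C¹` divergence-free vector field `u` vanishing on `∂Ω`, `ε > 0`,
`π₁ > 0` and a continuous `D ≥ 1` on `Ω`, every `C¹` scalar field `φ` satisfies
`∫_Ω (u·∇φ)φ + π₁ ∫_Ω D|∇φ|² + ε ∫_Ω φ² ≥ π₁ ∫_Ω |∇φ|² + ε ∫_Ω φ²`. -/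
theorem stmt1 (a b : Fin 2 → ℝ) (hab : ∀ i, a i < b i)
    (Ω : Set (EuclideanSpace ℝ (Fin 2)))
    (hΩ : Ω = {x : EuclideanSpace ℝ (Fin 2) | ∀ i, x i ∈ Set.Icc (a i) (b i)})
    (U : Set (EuclideanSpace ℝ (Fin 2))) (hU : IsOpen U) (hΩU : Ω ⊆ U)
    (u : EuclideanSpace ℝ (Fin 2) → EuclideanSpace ℝ (Fin 2))
    (hu : ContDiffOn ℝ 1 u U)
    (hdiv : ∀ x ∈ Ω, (∑ i, fderiv ℝ u x (EuclideanSpace.single i 1) i) = 0)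
    (hubd : ∀ x ∈ frontier Ω, u x = 0)
    (ε π₁ : ℝ) (hε : 0 < ε) (hπ₁ : 0 < π₁)
    (D : EuclideanSpace ℝ (Fin 2) → ℝ) (hD : Continuous D)
    (hD1 : ∀ x ∈ Ω, 1 ≤ D x)
    (V : Set (EuclideanSpace ℝ (Fin 2))) (hV : IsOpen V) (hΩV : Ω ⊆ V)
    (φ : EuclideanSpace ℝ (Fin 2) → ℝ)
    (hφ : ContDiffOn ℝ 1 φ V) :
    π₁ * (∫ x in Ω, ‖gradient φ x‖ ^ 2) + ε * (∫ x in Ω, (φ x) ^ 2) ≤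
      (∫ x in Ω, (inner ℝ (u x) (gradient φ x) : ℝ) * φ x)
        + π₁ * (∫ x in Ω, D x * ‖gradient φ x‖ ^ 2)
        + ε * (∫ x in Ω, (φ x) ^ 2) := by
  have hbox : Ω = ((PiLp.continuousLinearEquiv 2 ℝ (fun _ : Fin 2 => ℝ)).symm '' Set.Icc a b) :=
    aux_box_eq a b Ω hΩ
  have hΩc : IsCompact Ω := by
    rw [hbox]
    exact isCompact_Icc.image (PiLp.continuousLinearEquiv 2 ℝ (fun _ : Fin 2 => ℝ)).symm.continuous
  have hfc : ContinuousOn (fun x => fderiv ℝ φ x) V :=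
    hφ.continuousOn_fderiv_of_isOpen hV le_rfl
  have hgc : ContinuousOn (fun x => gradient φ x) V := by
    have hcd : Continuous (fun L : EuclideanSpace ℝ (Fin 2) →L[ℝ] ℝ =>
        (InnerProductSpace.toDual ℝ (EuclideanSpace ℝ (Fin 2))).symm L) :=
      (InnerProductSpace.toDual ℝ (EuclideanSpace ℝ (Fin 2))).symm.continuous
    exact hcd.comp_continuousOn hfc
  have hmono : (∫ x in Ω, ‖gradient φ x‖ ^ 2) ≤ (∫ x in Ω, D x * ‖gradient φ x‖ ^ 2) := by
    have hcont1 : ContinuousOn (fun x => ‖gradient φ x‖ ^ 2) Ω :=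
      ((hgc.mono hΩV).norm.pow 2)
    have hint1 : IntegrableOn (fun x => ‖gradient φ x‖ ^ 2) Ω :=
      hcont1.integrableOn_compact hΩc
    have hint2 : IntegrableOn (fun x => D x * ‖gradient φ x‖ ^ 2) Ω :=
      ((hD.continuousOn.mul hcont1)).integrableOn_compact hΩc
    refine setIntegral_mono_on hint1 hint2 hΩc.isClosed.measurableSet ?_
    intro x hx
    nlinarith [hD1 x hx, sq_nonneg ‖gradient φ x‖]
  have hkey : (∫ x in Ω, (inner ℝ (u x) (gradient φ x) : ℝ) * φ x) = 0 :=
    aux_key a b hab Ω hΩ U hU hΩU u hu hdiv hubd V hV hΩV φ hφ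
  rw [hkey]
  have := mul_le_mul_of_nonneg_left hmono hπ₁.le
  linarith
end

section
/- Let Ω ⊂ ℝ² be a closed rectangular box with positive volume, let u : ℝ² → ℝ² be continuously differentiable on a neighborhood of Ω with div u = 0 on Ω and u = 0 on ∂Ω, let ε > 0, π₁ > 0, and let D : ℝ² → ℝ be continuously differentiable with D ≥ 1 on Ω. Let Ω₁,…,Ω_m be pairwise disjoint measurable subsets whose union is Ω, and for each e let h_e > 0 be the local mesh size, C_inv > 0, and let the SUPG weight δ_e ≥ 0 satisfy δ_e ≤ 1/(2ε) and δ_e ≤ h_e² / (2 π₁ C_inv² (sup_{Ω_e} D)²). Let φ : ℝ² → ℝ be twice continuously differentiable on a neighborhood of Ω and satisfy, for each e, the inverse-type estimate ( ∫_{Ω_e} |∇·(D∇φ)|² dx )^{1/2} ≤ (C_inv (sup_{Ω_e} D) / h_e) ( ∫_{Ω_e} |∇φ|² dx )^{1/2}. Then the SUPG bilinear form is coercive with constant 1/2: a^ε_supg(φ,φ) ≥ (1/2) ‖φ‖_supg², where a^ε_supg(φ,φ) = ∫_Ω (u·∇φ)φ dx + π₁ ∫_Ω D |∇φ|² dx +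 ε ∫_Ω φ² dx + Σ_e δ_e ∫_{Ω_e} (u·∇φ + εφ − π₁ ∇·(D∇φ)) (u·∇φ) dx and ‖φ‖_supg² = π₁ ∫_Ω |∇φ|² dx + ε ∫_Ω φ² dx + Σ_e δ_e ∫_{Ω_e} (u·∇φ)² dx. -/
open MeasureTheory

/-- Pointwise divergence of a vector field on `ℝ² = EuclideanSpace ℝ (Fin 2)`. -/
noncomputable def vdiv (w : EuclideanSpace ℝ (Fin 2) → EuclideanSpace ℝ (Fin 2))
    (x : EuclideanSpace ℝ (Fin 2)) : ℝ :=
  ∑ i, fderiv ℝ w x (EuclideanSpace.single i 1) i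

/-- Expansion of a continuous linear functional on `ℝ²` in the standard basis. -/
lemma clm_expand (ℓ : EuclideanSpace ℝ (Fin 2) →L[ℝ] ℝ) (v : EuclideanSpace ℝ (Fin 2)) :
    ℓ v = ∑ i, v i * ℓ (EuclideanSpace.single i 1) := by
  have hv : v = ∑ i, v i • EuclideanSpace.single i (1:ℝ) := by
    ext j; simp [EuclideanSpace.single_apply]; fin_cases j <;> simp
  conv_lhs => rw [hv]
  rw [map_sum]
  simp [smul_eq_mul]

/-- The inner product against a gradient is the directional derivative. -/
lemma inner_grad (φ : EuclideanSpace ℝ (Fin 2) → ℝ) (x v : EuclideanSpace ℝ (Fin 2)) :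
    (inner ℝ v (gradient φ x) : ℝ) = fderiv ℝ φ x v := by
  rw [real_inner_comm, gradient]
  exact InnerProductSpace.toDual_symm_apply


theorem div_int_zero (a b : Fin 2 → ℝ) (hab : a ≤ b)
    (Ω : Set (EuclideanSpace ℝ (Fin 2)))
    (hΩ : Ω = {x : EuclideanSpace ℝ (Fin 2) | ∀ i, x i ∈ Set.Icc (a i) (b i)})
    (W : Set (EuclideanSpace ℝ (Fin 2))) (hW : IsOpen W) (hΩW : Ω ⊆ W)
    (w : EuclideanSpace ℝ (Fin 2) → EuclideanSpace ℝ (Fin 2))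
    (hw : ContDiffOn ℝ 1 w W)
    (hbd : ∀ x ∈ frontier Ω, w x = 0) :
    ∫ x in Ω, vdiv w x = 0 := by
  classical
  set eCLE : EuclideanSpace ℝ (Fin 2) ≃L[ℝ] (Fin 2 → ℝ) :=
    PiLp.continuousLinearEquiv 2 ℝ _ with heCLE
  have hΩpre : Ω = ⇑eCLE ⁻¹' Set.Icc a b := by
    rw [hΩ]; ext x
    simp only [Set.mem_setOf_eq, Set.mem_preimage, Set.mem_Icc, Pi.le_def, Set.mem_Icc]
    exact ⟨fun h => ⟨fun i => (h i).1, fun i => (h i).2⟩, fun h i => ⟨h.1 i, h.2 i⟩⟩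
  have hclosed : IsClosed Ω := by
    rw [hΩpre]; exact isClosed_Icc.preimage eCLE.continuous
  have hmemΩ : ∀ y : Fin 2 → ℝ, y ∈ Set.Icc a b → eCLE.symm y ∈ Ω := by
    intro y hy
    rw [hΩpre]; simpa using hy
  -- interior of Ω
  have hint : interior Ω = ⇑eCLE ⁻¹' (Set.pi Set.univ fun i => Set.Ioo (a i) (b i)) := by
    rw [hΩpre, ← eCLE.coe_toHomeomorph, ← Homeomorph.preimage_interior]
    congr 1
    rw [← Set.pi_univ_Icc, interior_pi_set Set.finite_univ]
    simp [interior_Icc]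
  -- differentiability of w on Ω
  have hwd : ∀ x ∈ W, HasFDerivAt w (fderiv ℝ w x) x := fun x hx =>
    ((hw.differentiableOn one_ne_zero).differentiableAt (hW.mem_nhds hx)).hasFDerivAt
  -- the component functions and derivatives
  set f : Fin 2 → (Fin 2 → ℝ) → ℝ := fun i y => w (eCLE.symm y) i with hf
  set f' : Fin 2 → (Fin 2 → ℝ) → (Fin 2 → ℝ) →L[ℝ] ℝ := fun i y =>
    ((EuclideanSpace.proj i).comp (fderiv ℝ w (eCLE.symm y))).comp
      (eCLE.symm : (Fin 2 → ℝ) →L[ℝ] EuclideanSpace ℝ (Fin 2)) with hf'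
  have Hc : ∀ i, ContinuousOn (f i) (Set.Icc a b) := by
    intro i
    apply (EuclideanSpace.proj i).continuous.comp_continuousOn
    apply (hw.continuousOn.mono hΩW |>.comp (eCLE.symm.continuous.continuousOn))
    intro y hy; exact hmemΩ y hy
  have Hd : ∀ y ∈ (Set.pi Set.univ fun i => Set.Ioo (a i) (b i)) \ (∅ : Set (Fin 2 → ℝ)),
      ∀ i, HasFDerivAt (f i) (f' i y) y := by
    intro y hy i
    have hyΩ : eCLE.symm y ∈ Ω := by
      apply hmemΩ
      rw [← Set.pi_univ_Icc]
      exact Set.pi_mono (fun i _ => Set.Ioo_subset_Icc_self) hy.1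
    have h1 : HasFDerivAt (fun z : Fin 2 → ℝ => w (eCLE.symm z))
        ((fderiv ℝ w (eCLE.symm y)).comp (eCLE.symm : (Fin 2 → ℝ) →L[ℝ] _)) y :=
      (hwd _ (hΩW hyΩ)).comp y eCLE.symm.hasFDerivAt
    exact ((EuclideanSpace.proj i).hasFDerivAt.comp y h1 : _)
  -- continuity of the divergence
  have hdivc : ContinuousOn (vdiv w) W := by
    have hfd : ContinuousOn (fderiv ℝ w) W := hw.continuousOn_fderiv_of_isOpen hW le_rfl
    apply continuousOn_finset_sum
    intro i _
    exact (EuclideanSpace.proj i).continuous.comp_continuousOn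
      (((ContinuousLinearMap.apply ℝ _ (EuclideanSpace.single i 1)).continuous).comp_continuousOn hfd)
  have hdiv_eq : (fun y : Fin 2 → ℝ => ∑ i, f' i y (Pi.single i 1)) =
      fun y => vdiv w (eCLE.symm y) := by
    funext y
    simp only [hf', ContinuousLinearMap.comp_apply, vdiv]
    rfl
  have Hi : IntegrableOn (fun y : Fin 2 → ℝ => ∑ i, f' i y (Pi.single i 1)) (Set.Icc a b) := by
    rw [hdiv_eq]
    apply ContinuousOn.integrableOn_compact isCompact_Icc
    exact (hdivc.mono hΩW |>.comp (eCLE.symm.continuous.continuousOn)) fun y hy => hmemΩ y hy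
  have key := integral_divergence_of_hasFDerivAt_off_countable' (a := a) (b := b) hab
    f f' ∅ Set.countable_empty Hc Hd Hi
  -- faces are zero
  have hface : ∀ (i : Fin 2) (c : ℝ), c = a i ∨ c = b i →
      ∀ x ∈ Set.Icc (a ∘ i.succAbove) (b ∘ i.succAbove), f i (i.insertNth c x) = 0 := by
    intro i c hc x hx
    have hmem : eCLE.symm (i.insertNth c x) ∈ Ω := by
      apply hmemΩ
      rw [← Set.pi_univ_Icc]
      intro k _
      by_cases hk : k = i
      · subst hk
        rw [Fin.insertNth_apply_same]
        rcases hc with rfl | rfl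
        · exact ⟨le_refl _, hab k⟩
        · exact ⟨hab k, le_refl _⟩
      · obtain ⟨j, rfl⟩ := Fin.exists_succAbove_eq hk
        simp only [Fin.insertNth_apply_succAbove]
        exact ⟨hx.1 j, hx.2 j⟩
    have hnotint : eCLE.symm (i.insertNth c x) ∉ interior Ω := by
      rw [hint]
      intro hmem'
      have h2 : (Fin.insertNth (α := fun _ => ℝ) i c x) i ∈ Set.Ioo (a i) (b i) := by
        simpa using hmem' i (by trivial)
      rw [Fin.insertNth_apply_same] at h2
      rcases hc with rfl | rfl
      · exact lt_irrefl _ h2.1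
      · exact lt_irrefl _ h2.2
    have hw0 : w (eCLE.symm (i.insertNth c x)) = 0 := by
      apply hbd
      rw [hclosed.frontier_eq]
      exact ⟨hmem, hnotint⟩
    show w (eCLE.symm (i.insertNth c x)) i = 0
    rw [hw0]; rfl
  -- all face integrals vanish
  rw [hdiv_eq] at key
  have hfaces0 : ∀ i : Fin 2,
      ((∫ x in Set.Icc (a ∘ i.succAbove) (b ∘ i.succAbove), f i (i.insertNth (b i) x)) -
        ∫ x in Set.Icc (a ∘ i.succAbove) (b ∘ i.succAbove), f i (i.insertNth (a i) x)) = 0 := by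
    intro i
    rw [setIntegral_eq_zero_of_forall_eq_zero (hface i (b i) (Or.inr rfl)),
      setIntegral_eq_zero_of_forall_eq_zero (hface i (a i) (Or.inl rfl)), sub_zero]
  rw [Finset.sum_congr rfl (fun i _ => hfaces0 i), Finset.sum_const_zero] at key
  -- transfer the measure
  have hmp : MeasurePreserving (MeasurableEquiv.toLp 2 (Fin 2 → ℝ)) :=
    (EuclideanSpace.volume_preserving_symm_measurableEquiv_toLp (ι := Fin 2)).symm
  have hemb := (MeasurableEquiv.toLp 2 (Fin 2 → ℝ)).measurableEmbedding
  have htrans := hmp.setIntegral_preimage_emb hemb (vdiv w) Ω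
  have hpre2 : (MeasurableEquiv.toLp 2 (Fin 2 → ℝ)) ⁻¹' Ω = Set.Icc a b := by
    ext y
    simp only [Set.mem_preimage]
    constructor
    · intro hy
      have : eCLE.symm y ∈ ⇑eCLE ⁻¹' Set.Icc a b := by rw [← hΩpre]; exact hy
      simpa using this
    · intro hy
      exact hmemΩ y hy
  rw [hpre2] at htrans
  rw [← htrans]; exact key

set_option maxHeartbeats 1000000 in
/-- SUPG coercivity: on a closed rectangular box `Ω ⊂ ℝ²`, with a `C¹`
divergence-free `u` vanishing on `∂Ω`, `ε, π₁ > 0`, `C¹` diffusivity `D ≥ 1` on `Ω`,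
a measurable partition `Ω₁,…,Ω_m` of `Ω` with SUPG weights
`0 ≤ δ_e ≤ min{1/(2ε), h_e²/(2π₁C_inv²(sup_{Ω_e}D)²)}`, every `C²` scalar field `φ`
satisfying the elementwise inverse estimate obeys
`a^ε_supg(φ,φ) ≥ (1/2)‖φ‖_supg²`. -/
theorem stmt3 (a b : Fin 2 → ℝ) (hab : ∀ i, a i < b i)
    (Ω : Set (EuclideanSpace ℝ (Fin 2)))
    (hΩ : Ω = {x : EuclideanSpace ℝ (Fin 2) | ∀ i, x i ∈ Set.Icc (a i) (b i)})
    (U : Set (EuclideanSpace ℝ (Fin 2))) (hU : IsOpen U) (hΩU : Ω ⊆ U)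
    (u : EuclideanSpace ℝ (Fin 2) → EuclideanSpace ℝ (Fin 2))
    (hu : ContDiffOn ℝ 1 u U)
    (hdiv : ∀ x ∈ Ω, vdiv u x = 0)
    (hubd : ∀ x ∈ frontier Ω, u x = 0)
    (ε π₁ : ℝ) (hε : 0 < ε) (hπ₁ : 0 < π₁)
    (D : EuclideanSpace ℝ (Fin 2) → ℝ) (hD : ContDiff ℝ 1 D)
    (hD1 : ∀ x ∈ Ω, 1 ≤ D x)
    (m : ℕ) (Ωe : Fin m → Set (EuclideanSpace ℝ (Fin 2)))
    (hmeas : ∀ e, MeasurableSet (Ωe e))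
    (hdisj : Pairwise (Function.onFun Disjoint Ωe))
    (hcover : (⋃ e, Ωe e) = Ω)
    (h : Fin m → ℝ) (hh : ∀ e, 0 < h e)
    (Cinv : ℝ) (hCinv : 0 < Cinv)
    (δ : Fin m → ℝ) (hδ0 : ∀ e, 0 ≤ δ e)
    (hδ1 : ∀ e, δ e ≤ 1 / (2 * ε))
    (hδ2 : ∀ e, δ e ≤ (h e) ^ 2 / (2 * π₁ * Cinv ^ 2 * (sSup (D '' Ωe e)) ^ 2))
    (V : Set (EuclideanSpace ℝ (Fin 2))) (hV : IsOpen V) (hΩV : Ω ⊆ V)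
    (φ : EuclideanSpace ℝ (Fin 2) → ℝ)
    (hφ : ContDiffOn ℝ 2 φ V)
    (hinv : ∀ e, Real.sqrt (∫ x in Ωe e, (vdiv (fun y => D y • gradient φ y) x) ^ 2)
      ≤ (Cinv * sSup (D '' Ωe e) / h e) *
        Real.sqrt (∫ x in Ωe e, ‖gradient φ x‖ ^ 2)) :
    (1 / 2) * (π₁ * (∫ x in Ω, ‖gradient φ x‖ ^ 2) + ε * (∫ x in Ω, (φ x) ^ 2)
        + ∑ e, δ e * (∫ x in Ωe e, ((inner ℝ (u x) (gradient φ x) : ℝ)) ^ 2)) ≤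
      (∫ x in Ω, (inner ℝ (u x) (gradient φ x) : ℝ) * φ x)
        + π₁ * (∫ x in Ω, D x * ‖gradient φ x‖ ^ 2)
        + ε * (∫ x in Ω, (φ x) ^ 2)
        + ∑ e, δ e * (∫ x in Ωe e,
            ((inner ℝ (u x) (gradient φ x) : ℝ) + ε * φ x
              - π₁ * vdiv (fun y => D y • gradient φ y) x)
            * (inner ℝ (u x) (gradient φ x) : ℝ)) := by
  classical
  have hab' : a ≤ b := fun i => (hab i).le
  have hΩW : Ω ⊆ U ∩ V := Set.subset_inter hΩU hΩV
  have hW : IsOpen (U ∩ V) := hU.inter hV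
  set eCLE : EuclideanSpace ℝ (Fin 2) ≃L[ℝ] (Fin 2 → ℝ) :=
    PiLp.continuousLinearEquiv 2 ℝ _ with heCLE
  have hΩpre : Ω = ⇑eCLE ⁻¹' Set.Icc a b := by
    rw [hΩ]; ext x
    simp only [Set.mem_setOf_eq, Set.mem_preimage, Set.mem_Icc, Pi.le_def, Set.mem_Icc]
    exact ⟨fun h => ⟨fun i => (h i).1, fun i => (h i).2⟩, fun h i => ⟨h.1 i, h.2 i⟩⟩
  have hcomp : IsCompact Ω := by
    rw [hΩpre]; exact eCLE.toHomeomorph.isCompact_preimage.mpr isCompact_Icc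
  have hclosed : IsClosed Ω := by
    rw [hΩpre]; exact isClosed_Icc.preimage eCLE.continuous
  have hmeasΩ : MeasurableSet Ω := hclosed.measurableSet
  have hsubΩ : ∀ e, Ωe e ⊆ Ω := fun e => hcover ▸ Set.subset_iUnion Ωe e
  -- continuity facts
  have hgC1 : ContDiffOn ℝ 1 (gradient φ) V := by
    have h1 : ContDiffOn ℝ 1 (fderiv ℝ φ) V := hφ.fderiv_of_isOpen hV (by norm_num)
    exact (InnerProductSpace.toDual ℝ
      (EuclideanSpace ℝ (Fin 2))).symm.toContinuousLinearEquiv.contDiff.comp_contDiffOn h1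
  have cg : ContinuousOn (gradient φ) V := hgC1.continuousOn
  have cφ : ContinuousOn φ V := hφ.continuousOn
  have cgn : ContinuousOn (fun x => ‖gradient φ x‖ ^ 2) V := (cg.norm.pow 2)
  have cP : ContinuousOn (fun x => (inner ℝ (u x) (gradient φ x) : ℝ)) (U ∩ V) :=
    ContinuousOn.inner (hu.continuousOn.mono Set.inter_subset_left)
      (cg.mono Set.inter_subset_right)
  have hDgC1 : ContDiffOn ℝ 1 (fun y => D y • gradient φ y) V :=
    (hD.contDiffOn).smul hgC1
  have hDgfd : ContinuousOn (fderiv ℝ (fun y => D y • gradient φ y)) V :=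
    hDgC1.continuousOn_fderiv_of_isOpen hV le_rfl
  have cL : ContinuousOn (fun x => vdiv (fun y => D y • gradient φ y) x) V := by
    apply continuousOn_finset_sum
    intro i _
    exact (EuclideanSpace.proj i).continuous.comp_continuousOn
      (((ContinuousLinearMap.apply ℝ _
        (EuclideanSpace.single i 1)).continuous).comp_continuousOn hDgfd)
  -- integrability facts
  have intΩ : ∀ f : EuclideanSpace ℝ (Fin 2) → ℝ, ContinuousOn f (U ∩ V) →
      IntegrableOn f Ω := fun f hf => (hf.mono hΩW).integrableOn_compact hcomp
  have intE : ∀ (e : Fin m) (f : EuclideanSpace ℝ (Fin 2) → ℝ), ContinuousOn f (U ∩ V) →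
      IntegrableOn f (Ωe e) := fun e f hf => (intΩ f hf).mono_set (hsubΩ e)
  have cφW : ContinuousOn φ (U ∩ V) := cφ.mono Set.inter_subset_right
  have cgnW : ContinuousOn (fun x => ‖gradient φ x‖ ^ 2) (U ∩ V) :=
    cgn.mono Set.inter_subset_right
  have cLW : ContinuousOn (fun x => vdiv (fun y => D y • gradient φ y) x) (U ∩ V) :=
    cL.mono Set.inter_subset_right
  have cDW : ContinuousOn D (U ∩ V) := hD.continuous.continuousOn
  have cφ2W : ContinuousOn (fun x => (φ x) ^ 2) (U ∩ V) := cφW.pow 2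
  have cP2W : ContinuousOn (fun x => ((inner ℝ (u x) (gradient φ x) : ℝ)) ^ 2) (U ∩ V) := cP.pow 2
  have cφPW : ContinuousOn (fun x => φ x * (inner ℝ (u x) (gradient φ x) : ℝ)) (U ∩ V) :=
    cφW.mul cP
  have cLPW : ContinuousOn (fun x =>
      vdiv (fun y => D y • gradient φ y) x * (inner ℝ (u x) (gradient φ x) : ℝ)) (U ∩ V) :=
    cLW.mul cP
  have cL2W : ContinuousOn (fun x => (vdiv (fun y => D y • gradient φ y) x) ^ 2) (U ∩ V) :=
    cLW.pow 2
  have cDgnW : ContinuousOn (fun x => D x * ‖gradient φ x‖ ^ 2) (U ∩ V) := cDW.mul cgnW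
  -- the partition identity
  have part : ∀ f : EuclideanSpace ℝ (Fin 2) → ℝ, IntegrableOn f Ω →
      ∫ x in Ω, f x = ∑ e, ∫ x in Ωe e, f x := by
    intro f hf
    rw [← hcover] at hf ⊢
    rw [integral_iUnion hmeas hdisj hf, tsum_fintype]
  -- Step 1: the transport term integrates to zero
  have hzero : ∫ x in Ω, (inner ℝ (u x) (gradient φ x) : ℝ) * φ x = 0 := by
    set w : EuclideanSpace ℝ (Fin 2) → EuclideanSpace ℝ (Fin 2) :=
      fun y => (φ y * φ y) • u y with hw_def
    have hφ1 : ContDiffOn ℝ 1 φ (U ∩ V) :=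
      (hφ.mono Set.inter_subset_right).of_le one_le_two
    have hwC1 : ContDiffOn ℝ 1 w (U ∩ V) :=
      (hφ1.mul hφ1).smul (hu.mono Set.inter_subset_left)
    have hfront : ∀ x ∈ frontier Ω, w x = 0 := by
      intro x hx
      rw [hw_def]
      simp only
      rw [hubd x hx, smul_zero]
    have hiz := div_int_zero a b hab' Ω hΩ (U ∩ V) hW hΩW w hwC1 hfront
    have hcongr : ∀ x ∈ Ω, vdiv w x =
        2 * ((inner ℝ (u x) (gradient φ x) : ℝ) * φ x) := by
      intro x hx
      have hφx : DifferentiableAt ℝ φ x :=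
        (hφ.differentiableOn (by norm_num)).differentiableAt (hV.mem_nhds (hΩV hx))
      have hux : DifferentiableAt ℝ u x :=
        (hu.differentiableOn one_ne_zero).differentiableAt (hU.mem_nhds (hΩU hx))
      have hwx : HasFDerivAt w ((φ x * φ x) • fderiv ℝ u x +
          (φ x • fderiv ℝ φ x + φ x • fderiv ℝ φ x).smulRight (u x)) x :=
        (hφx.hasFDerivAt.mul hφx.hasFDerivAt).smul hux.hasFDerivAt
      have hfd := hwx.fderiv
      show ∑ i, fderiv ℝ w x (EuclideanSpace.single i 1) i = _
      rw [hfd]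
      simp only [ContinuousLinearMap.add_apply, ContinuousLinearMap.coe_smul', Pi.smul_apply,
        ContinuousLinearMap.smulRight_apply, PiLp.add_apply, PiLp.smul_apply, smul_eq_mul]
      rw [Finset.sum_add_distrib, ← Finset.mul_sum]
      have h1 : ∑ i, (fderiv ℝ u x (EuclideanSpace.single i 1)) i = vdiv u x := rfl
      rw [h1, hdiv x hx, mul_zero, zero_add]
      have h2 : ∀ i : Fin 2, (φ x * (fderiv ℝ φ x) (EuclideanSpace.single i 1) +
          φ x * (fderiv ℝ φ x) (EuclideanSpace.single i 1)) * u x i =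
          2 * φ x * (u x i * (fderiv ℝ φ x) (EuclideanSpace.single i 1)) := fun i => by ring
      rw [Finset.sum_congr rfl (fun i _ => h2 i), ← Finset.mul_sum, ← clm_expand,
        ← inner_grad φ x (u x)]
      ring
    have h2 : ∫ x in Ω, vdiv w x =
        ∫ x in Ω, 2 * ((inner ℝ (u x) (gradient φ x) : ℝ) * φ x) :=
      setIntegral_congr_fun hmeasΩ hcongr
    rw [hiz, integral_const_mul] at h2
    linarith
  -- Step 2: the elementwise coercivity bound
  have main : ∀ e : Fin m,
      (1 / 2) * (π₁ * (∫ x in Ωe e, ‖gradient φ x‖ ^ 2) + ε * (∫ x in Ωe e, (φ x) ^ 2)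
          + δ e * (∫ x in Ωe e, ((inner ℝ (u x) (gradient φ x) : ℝ)) ^ 2)) ≤
        π₁ * (∫ x in Ωe e, D x * ‖gradient φ x‖ ^ 2) + ε * (∫ x in Ωe e, (φ x) ^ 2)
          + δ e * (∫ x in Ωe e,
              ((inner ℝ (u x) (gradient φ x) : ℝ) + ε * φ x
                - π₁ * vdiv (fun y => D y • gradient φ y) x)
              * (inner ℝ (u x) (gradient φ x) : ℝ)) := by
    intro e
    set S := sSup (D '' Ωe e) with hS_def
    set A := ∫ x in Ωe e, ‖gradient φ x‖ ^ 2 with hA_def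
    set B := ∫ x in Ωe e, (φ x) ^ 2 with hB_def
    set C := ∫ x in Ωe e, ((inner ℝ (u x) (gradient φ x) : ℝ)) ^ 2 with hC_def
    set AD := ∫ x in Ωe e, D x * ‖gradient φ x‖ ^ 2 with hAD_def
    set Q := ∫ x in Ωe e, φ x * (inner ℝ (u x) (gradient φ x) : ℝ) with hQ_def
    set R := ∫ x in Ωe e, vdiv (fun y => D y • gradient φ y) x *
      (inner ℝ (u x) (gradient φ x) : ℝ) with hR_def
    set S2 := ∫ x in Ωe e, (vdiv (fun y => D y • gradient φ y) x) ^ 2 with hS2_def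
    have iP2 : IntegrableOn (fun x => ((inner ℝ (u x) (gradient φ x) : ℝ)) ^ 2) (Ωe e) volume :=
      intE e _ cP2W
    have iφ2 : IntegrableOn (fun x => (φ x) ^ 2) (Ωe e) volume := intE e _ cφ2W
    have iφP : IntegrableOn (fun x => φ x * (inner ℝ (u x) (gradient φ x) : ℝ)) (Ωe e) volume :=
      intE e _ cφPW
    have iLP : IntegrableOn (fun x => vdiv (fun y => D y • gradient φ y) x *
        (inner ℝ (u x) (gradient φ x) : ℝ)) (Ωe e) volume := intE e _ cLPW
    have iL2 : IntegrableOn (fun x => (vdiv (fun y => D y • gradient φ y) x) ^ 2) (Ωe e) volume :=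
      intE e _ cL2W
    have iεφP : IntegrableOn (fun x => ε * (φ x * (inner ℝ (u x) (gradient φ x) : ℝ)))
        (Ωe e) volume := iφP.const_mul ε
    have iπLP : IntegrableOn (fun x => π₁ * (vdiv (fun y => D y • gradient φ y) x *
        (inner ℝ (u x) (gradient φ x) : ℝ))) (Ωe e) volume := iLP.const_mul π₁
    have iSum : IntegrableOn (fun x => ((inner ℝ (u x) (gradient φ x) : ℝ)) ^ 2
        + ε * (φ x * (inner ℝ (u x) (gradient φ x) : ℝ))) (Ωe e) volume := iP2.add iεφP
    have icφ2 : IntegrableOn (fun x => 4 * ε ^ 2 * (φ x) ^ 2) (Ωe e) volume :=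
      iφ2.const_mul (4 * ε ^ 2)
    have iSum2 : IntegrableOn (fun x => 4 * ε ^ 2 * (φ x) ^ 2
        + ((inner ℝ (u x) (gradient φ x) : ℝ)) ^ 2) (Ωe e) volume := icφ2.add iP2
    have iNeg : IntegrableOn (fun x => -(4 * ε ^ 2 * (φ x) ^ 2
        + ((inner ℝ (u x) (gradient φ x) : ℝ)) ^ 2)) (Ωe e) volume := iSum2.neg
    have i4εφP : IntegrableOn (fun x => 4 * ε * (φ x * (inner ℝ (u x) (gradient φ x) : ℝ)))
        (Ωe e) volume := iφP.const_mul (4 * ε)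
    have i4πLP : IntegrableOn (fun x => 4 * π₁ * (vdiv (fun y => D y • gradient φ y) x *
        (inner ℝ (u x) (gradient φ x) : ℝ))) (Ωe e) volume := iLP.const_mul (4 * π₁)
    have icL2 : IntegrableOn (fun x => 4 * π₁ ^ 2 * (vdiv (fun y => D y • gradient φ y) x) ^ 2)
        (Ωe e) volume := iL2.const_mul (4 * π₁ ^ 2)
    have iSum3 : IntegrableOn (fun x => 4 * π₁ ^ 2 * (vdiv (fun y => D y • gradient φ y) x) ^ 2
        + ((inner ℝ (u x) (gradient φ x) : ℝ)) ^ 2) (Ωe e) volume := icL2.add iP2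
    -- expansion of the SUPG term
    have expand : (∫ x in Ωe e,
        ((inner ℝ (u x) (gradient φ x) : ℝ) + ε * φ x
          - π₁ * vdiv (fun y => D y • gradient φ y) x)
        * (inner ℝ (u x) (gradient φ x) : ℝ)) = C + ε * Q - π₁ * R := by
      have h1 : ∀ x : EuclideanSpace ℝ (Fin 2),
          ((inner ℝ (u x) (gradient φ x) : ℝ) + ε * φ x
            - π₁ * vdiv (fun y => D y • gradient φ y) x)
          * (inner ℝ (u x) (gradient φ x) : ℝ) =
          ((inner ℝ (u x) (gradient φ x) : ℝ)) ^ 2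
            + ε * (φ x * (inner ℝ (u x) (gradient φ x) : ℝ))
            - π₁ * (vdiv (fun y => D y • gradient φ y) x *
                (inner ℝ (u x) (gradient φ x) : ℝ)) := fun x => by ring
      simp only [h1]
      rw [integral_sub iSum iπLP, integral_add iP2 iεφP, integral_const_mul, integral_const_mul]
    rw [expand]
    -- nonnegativity and basic bounds
    have hA0 : 0 ≤ A := setIntegral_nonneg (hmeas e) (fun x _ => sq_nonneg _)
    have hB0 : 0 ≤ B := setIntegral_nonneg (hmeas e) (fun x _ => sq_nonneg _)
    have hC0 : 0 ≤ C := setIntegral_nonneg (hmeas e) (fun x _ => sq_nonneg _)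
    have hS20 : 0 ≤ S2 := setIntegral_nonneg (hmeas e) (fun x _ => sq_nonneg _)
    have hADA : A ≤ AD := by
      apply setIntegral_mono_on (intE e _ cgnW) (intE e _ cDgnW) (hmeas e)
      intro x hx
      nlinarith [hD1 x (hsubΩ e hx), sq_nonneg ‖gradient φ x‖]
    have hS0 : 0 ≤ S := by
      rcases (D '' Ωe e).eq_empty_or_nonempty with hemp | ⟨y, x, hx, rfl⟩
      · rw [hS_def, hemp, Real.sSup_empty]
      · have hbdd : BddAbove (D '' Ωe e) :=
          ((hcomp.image hD.continuous).bddAbove).mono (Set.image_mono (hsubΩ e))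
        have := le_csSup hbdd (Set.mem_image_of_mem D hx)
        have h1 := hD1 x (hsubΩ e hx)
        rw [hS_def]
        linarith
    -- inverse estimate squared, multiplied out
    have b3' : (h e) ^ 2 * S2 ≤ Cinv ^ 2 * S ^ 2 * A := by
      have step : h e * Real.sqrt S2 ≤ Cinv * S * Real.sqrt A := by
        have hst := mul_le_mul_of_nonneg_left (hinv e) (hh e).le
        have hrw : h e * (Cinv * S / h e * Real.sqrt A) = Cinv * S * Real.sqrt A := by
          field_simp [(hh e).ne']
        rwa [hrw] at hst
      have h1 := pow_le_pow_left₀ (mul_nonneg (hh e).le (Real.sqrt_nonneg _)) step 2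
      calc (h e) ^ 2 * S2 = (h e * Real.sqrt S2) ^ 2 := by
            rw [mul_pow, Real.sq_sqrt hS20]
        _ ≤ (Cinv * S * Real.sqrt A) ^ 2 := h1
        _ = Cinv ^ 2 * S ^ 2 * A := by rw [mul_pow, mul_pow, Real.sq_sqrt hA0]
    -- bounds on the weights
    have b5 : δ e * ε ≤ 1 / 2 := by
      have := (le_div_iff₀ (by positivity : (0:ℝ) < 2 * ε)).mp (hδ1 e)
      linarith
    have b4' : δ e * π₁ ^ 2 * (Cinv ^ 2 * S ^ 2) ≤ (π₁ / 2) * (h e) ^ 2 := by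
      rcases eq_or_lt_of_le hS0 with hS | hS
      · have hz : δ e * π₁ ^ 2 * (Cinv ^ 2 * S ^ 2) = 0 := by rw [← hS]; ring
        rw [hz]; positivity
      · have hd : (0:ℝ) < 2 * π₁ * Cinv ^ 2 * S ^ 2 :=
          mul_pos (mul_pos (mul_pos two_pos hπ₁) (pow_pos hCinv 2)) (pow_pos hS 2)
        have h2 := (le_div_iff₀ hd).mp (hδ2 e)
        nlinarith [mul_le_mul_of_nonneg_left h2 hπ₁.le]
    have m1 := mul_le_mul_of_nonneg_left b3' (mul_nonneg (hδ0 e) (sq_nonneg π₁))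
    have m2 := mul_le_mul_of_nonneg_right b4' hA0
    have m3 : δ e * π₁ ^ 2 * S2 ≤ (π₁ / 2) * A := by
      have hh2 : (0:ℝ) < (h e) ^ 2 := pow_pos (hh e) 2
      rw [← mul_le_mul_iff_of_pos_left hh2]
      nlinarith [m1, m2]
    -- Young's inequality bounds
    have b1 : -(4 * ε ^ 2 * B + C) ≤ 4 * ε * Q := by
      have hle := setIntegral_mono_on iNeg i4εφP (hmeas e)
        (fun x _ => by nlinarith [sq_nonneg (2 * ε * φ x + (inner ℝ (u x) (gradient φ x) : ℝ))])
      rw [integral_neg, integral_add icφ2 iP2, integral_const_mul, integral_const_mul] at hle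
      exact hle
    have b2 : 4 * π₁ * R ≤ 4 * π₁ ^ 2 * S2 + C := by
      have hle := setIntegral_mono_on i4πLP iSum3 (hmeas e)
        (fun x _ => by nlinarith [sq_nonneg (2 * π₁ * vdiv (fun y => D y • gradient φ y) x
          - (inner ℝ (u x) (gradient φ x) : ℝ))])
      rw [integral_const_mul, integral_add icL2 iP2, integral_const_mul] at hle
      exact hle
    have p1 := mul_le_mul_of_nonneg_left b1 (hδ0 e)
    have p2 := mul_le_mul_of_nonneg_right b5 (mul_nonneg hε.le hB0)
    have p3 := mul_le_mul_of_nonneg_left b2 (hδ0 e)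
    have pad := mul_le_mul_of_nonneg_left hADA hπ₁.le
    linarith [p1, p2, p3, m3, pad]
  -- Step 3: assemble
  rw [hzero,
    part (fun x => ‖gradient φ x‖ ^ 2) (intΩ _ cgnW),
    part (fun x => (φ x) ^ 2) (intΩ _ cφ2W),
    part (fun x => D x * ‖gradient φ x‖ ^ 2) (intΩ _ cDgnW)]
  have sum_le := Finset.sum_le_sum (fun e (_ : e ∈ Finset.univ) => main e)
  calc (1 / 2) * (π₁ * ∑ e, (∫ x in Ωe e, ‖gradient φ x‖ ^ 2)
        + ε * ∑ e, (∫ x in Ωe e, (φ x) ^ 2)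
        + ∑ e, δ e * (∫ x in Ωe e, ((inner ℝ (u x) (gradient φ x) : ℝ)) ^ 2))
      = ∑ e, (1 / 2) * (π₁ * (∫ x in Ωe e, ‖gradient φ x‖ ^ 2)
          + ε * (∫ x in Ωe e, (φ x) ^ 2)
          + δ e * (∫ x in Ωe e, ((inner ℝ (u x) (gradient φ x) : ℝ)) ^ 2)) := by
        rw [Finset.mul_sum, Finset.mul_sum, ← Finset.sum_add_distrib,
          ← Finset.sum_add_distrib, Finset.mul_sum]
    _ ≤ ∑ e, (π₁ * (∫ x in Ωe e, D x * ‖gradient φ x‖ ^ 2)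
          + ε * (∫ x in Ωe e, (φ x) ^ 2)
          + δ e * (∫ x in Ωe e,
              ((inner ℝ (u x) (gradient φ x) : ℝ) + ε * φ x
                - π₁ * vdiv (fun y => D y • gradient φ y) x)
              * (inner ℝ (u x) (gradient φ x) : ℝ))) := sum_le
    _ = 0 + π₁ * ∑ e, (∫ x in Ωe e, D x * ‖gradient φ x‖ ^ 2)
          + ε * ∑ e, (∫ x in Ωe e, (φ x) ^ 2)
          + ∑ e, δ e * (∫ x in Ωe e,
              ((inner ℝ (u x) (gradient φ x) : ℝ) + ε * φ x
                - π₁ * vdiv (fun y => D y • gradient φ y) x)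
              * (inner ℝ (u x) (gradient φ x) : ℝ)) := by
        rw [zero_add, Finset.mul_sum, Finset.mul_sum, ← Finset.sum_add_distrib,
          ← Finset.sum_add_distrib]
end

section
/- Let Ω ⊂ ℝ² be a closed rectangular box with positive volume, let u : ℝ² → ℝ² be continuously differentiable on a neighborhood of Ω with div u = 0 on Ω and u = 0 on ∂Ω, let ε > 0, π₁ > 0, let D : ℝ² → ℝ be continuously differentiable with D ≥ 1 on Ω, let Ω₁,…,Ω_m be a measurable partition of Ω with SUPG weights δ_e ≥ 0, mesh sizes h_e > 0 and inverse constant C_inv > 0 satisfying δ_e ≤ 1/(2ε) and δ_e ≤ h_e²/(2 π₁ C_inv² (sup_{Ω_e} D)²), and let c_Ω > 0. Then there exists a constant C ≥ 0, depending only on c_Ω, ε, π₁, sup_Ω D, sup_Ω |u| and the weights δ_e, such that for all φ, ψ twice continuously differentiable on a neighborhood of Ω that satisfy the Poincaré inequality ∫_Ω f² dx ≤ c_Ω ∫_Ω |∇f|² dx (for f = φ and f = ψ) and the elementwise inverse-type estimate ‖∇·(D∇f)‖_{L²(Ω_e)} ≤ (C_inv (sup_{Ω_e} D)/h_e) ‖∇f‖_{L²(Ω_e)}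 for every e, the SUPG bilinear form is continuous: a^ε_supg(φ,ψ) ≤ C (∫_Ω |∇φ|² dx)^{1/2} (∫_Ω |∇ψ|² dx)^{1/2}. -/
open MeasureTheory

section SupgHelpers

lemma supg_cs2 {α : Type*} [MeasurableSpace α] {μ : Measure α} {f g : α → ℝ}
    (hf : MemLp f 2 μ) (hg : MemLp g 2 μ) (hfg : Integrable (fun x => f x * g x) μ) :
    ∫ x, f x * g x ∂μ ≤ Real.sqrt (∫ x, f x ^ 2 ∂μ) * Real.sqrt (∫ x, g x ^ 2 ∂μ) := by
  have h2 : (2 : ℝ).HolderConjugate 2 := Real.HolderConjugate.two_two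
  have hf' : MemLp f (ENNReal.ofReal 2) μ := by convert hf using 2; norm_num
  have hg' : MemLp g (ENNReal.ofReal 2) μ := by convert hg using 2; norm_num
  have key := integral_mul_norm_le_Lp_mul_Lq h2 hf' hg'
  have habs : Integrable (fun x => ‖f x‖ * ‖g x‖) μ := by
    simpa [Real.norm_eq_abs, abs_mul] using hfg.abs
  have h1 : ∫ x, f x * g x ∂μ ≤ ∫ x, ‖f x‖ * ‖g x‖ ∂μ := by
    refine integral_mono hfg habs fun x => ?_
    calc f x * g x ≤ |f x * g x| := le_abs_self _
    _ = ‖f x‖ * ‖g x‖ := by rw [abs_mul]; rfl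
  refine h1.trans (key.trans_eq ?_)
  have e1 : ∀ y : ℝ, ‖y‖ ^ (2 : ℝ) = y ^ 2 := fun y => by
    rw [Real.norm_eq_abs, show (2 : ℝ) = ((2 : ℕ) : ℝ) by norm_num, Real.rpow_natCast, sq_abs]
  simp only [e1, Real.sqrt_eq_rpow]

variable {E : Type*} [NormedAddCommGroup E] [NormedSpace ℝ E] [MeasurableSpace E]
  [BorelSpace E] {μ : Measure E} [IsFiniteMeasureOnCompacts μ]

lemma supg_memL2 {f : E → ℝ} {s : Set E} (hs : IsCompact s) (hms : MeasurableSet s)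
    (hf : ContinuousOn f s) : MemLp f 2 (μ.restrict s) := by
  refine (memLp_two_iff_integrable_sq (hf.aestronglyMeasurable hms)).mpr ?_
  exact (hf.pow 2).integrableOn_compact hs

lemma supg_sqrt_int_le {s : Set E} (hms : MeasurableSet s) {f p : E → ℝ} {M : ℝ} (hM : 0 ≤ M)
    (hf : IntegrableOn (fun x => f x ^ 2) s μ) (hp : IntegrableOn (fun x => p x ^ 2) s μ)
    (hpt : ∀ x ∈ s, |f x| ≤ M * p x) :
    Real.sqrt (∫ x in s, f x ^ 2 ∂μ) ≤ M * Real.sqrt (∫ x in s, p x ^ 2 ∂μ) := by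
  have h1 : ∫ x in s, f x ^ 2 ∂μ ≤ ∫ x in s, M ^ 2 * p x ^ 2 ∂μ := by
    refine setIntegral_mono_on hf (hp.const_mul _) hms fun x hx => ?_
    nlinarith [hpt x hx, abs_nonneg (f x), sq_abs (f x)]
  calc Real.sqrt (∫ x in s, f x ^ 2 ∂μ) ≤ Real.sqrt (∫ x in s, M ^ 2 * p x ^ 2 ∂μ) :=
    Real.sqrt_le_sqrt h1
  _ = M * Real.sqrt (∫ x in s, p x ^ 2 ∂μ) := by
    rw [integral_const_mul, Real.sqrt_mul (sq_nonneg M), Real.sqrt_sq hM]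

lemma supg_sqrt_int_mono {s t : Set E} (hst : s ⊆ t) {f : E → ℝ}
    (hf : IntegrableOn (fun x => f x ^ 2) t μ) :
    Real.sqrt (∫ x in s, f x ^ 2 ∂μ) ≤ Real.sqrt (∫ x in t, f x ^ 2 ∂μ) :=
  Real.sqrt_le_sqrt (setIntegral_mono_set hf
    (Filter.Eventually.of_forall fun _ => sq_nonneg _) (HasSubset.Subset.eventuallyLE hst))

lemma supg_contDiffOn_gradient {H : Type*} [NormedAddCommGroup H] [InnerProductSpace ℝ H]
    [CompleteSpace H] {f : H → ℝ} {V : Set H} (hV : IsOpen V) (hf : ContDiffOn ℝ 2 f V) :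
    ContDiffOn ℝ 1 (gradient f) V := by
  have h1 : ContDiffOn ℝ 1 (fderiv ℝ f) V := hf.fderiv_of_isOpen hV (by norm_num)
  exact (InnerProductSpace.toDual ℝ H).symm.contDiff.comp_contDiffOn h1

lemma supg_continuousOn_vdiv {w : EuclideanSpace ℝ (Fin 2) → EuclideanSpace ℝ (Fin 2)}
    {V : Set (EuclideanSpace ℝ (Fin 2))} (hV : IsOpen V) (hw : ContDiffOn ℝ 1 w V) :
    ContinuousOn (vdiv w) V := by
  have h1 : ContinuousOn (fderiv ℝ w) V := hw.continuousOn_fderiv_of_isOpen hV le_rfl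
  unfold vdiv
  refine continuousOn_finset_sum _ fun i _ => ?_
  have h2 : Continuous fun L : EuclideanSpace ℝ (Fin 2) →L[ℝ] EuclideanSpace ℝ (Fin 2) =>
      L (EuclideanSpace.single i 1) i :=
    (continuous_apply i).comp ((PiLp.continuous_ofLp (p := 2) (β := fun _ : Fin 2 => ℝ)).comp
      ((ContinuousLinearMap.apply ℝ (EuclideanSpace ℝ (Fin 2))
        (EuclideanSpace.single i (1 : ℝ))).continuous))
  exact h2.comp_continuousOn h1

end SupgHelpers

/-- SUPG continuity: under the geometric/data hypotheses of the SUPG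
setting there exists `C ≥ 0` (depending only on the fixed data `c_Ω, ε, π₁, D, u, δ`)
such that for all `C²` fields `φ, ψ` satisfying the Poincaré inequality and the
elementwise inverse estimate,
`a^ε_supg(φ,ψ) ≤ C ‖∇φ‖_{L²(Ω)} ‖∇ψ‖_{L²(Ω)}`. -/
theorem stmt4 (a b : Fin 2 → ℝ) (hab : ∀ i, a i < b i)
    (Ω : Set (EuclideanSpace ℝ (Fin 2)))
    (hΩ : Ω = {x : EuclideanSpace ℝ (Fin 2) | ∀ i, x i ∈ Set.Icc (a i) (b i)})
    (U : Set (EuclideanSpace ℝ (Fin 2))) (hU : IsOpen U) (hΩU : Ω ⊆ U)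
    (u : EuclideanSpace ℝ (Fin 2) → EuclideanSpace ℝ (Fin 2))
    (hu : ContDiffOn ℝ 1 u U)
    (hdiv : ∀ x ∈ Ω, vdiv u x = 0)
    (hubd : ∀ x ∈ frontier Ω, u x = 0)
    (ε π₁ : ℝ) (hε : 0 < ε) (hπ₁ : 0 < π₁)
    (D : EuclideanSpace ℝ (Fin 2) → ℝ) (hD : ContDiff ℝ 1 D)
    (hD1 : ∀ x ∈ Ω, 1 ≤ D x)
    (m : ℕ) (Ωe : Fin m → Set (EuclideanSpace ℝ (Fin 2)))
    (hmeas : ∀ e, MeasurableSet (Ωe e))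
    (hdisj : Pairwise (Function.onFun Disjoint Ωe))
    (hcover : (⋃ e, Ωe e) = Ω)
    (h : Fin m → ℝ) (hh : ∀ e, 0 < h e)
    (Cinv : ℝ) (hCinv : 0 < Cinv)
    (δ : Fin m → ℝ) (hδ0 : ∀ e, 0 ≤ δ e)
    (hδ1 : ∀ e, δ e ≤ 1 / (2 * ε))
    (hδ2 : ∀ e, δ e ≤ (h e) ^ 2 / (2 * π₁ * Cinv ^ 2 * (sSup (D '' Ωe e)) ^ 2))
    (cΩ : ℝ) (hcΩ : 0 < cΩ) :
    ∃ C : ℝ, 0 ≤ C ∧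
      ∀ (φ ψ : EuclideanSpace ℝ (Fin 2) → ℝ),
        (∃ V, IsOpen V ∧ Ω ⊆ V ∧ ContDiffOn ℝ 2 φ V) →
        (∃ W, IsOpen W ∧ Ω ⊆ W ∧ ContDiffOn ℝ 2 ψ W) →
        (∫ x in Ω, (φ x) ^ 2) ≤ cΩ * (∫ x in Ω, ‖gradient φ x‖ ^ 2) →
        (∫ x in Ω, (ψ x) ^ 2) ≤ cΩ * (∫ x in Ω, ‖gradient ψ x‖ ^ 2) →
        (∀ e, Real.sqrt (∫ x in Ωe e, (vdiv (fun y => D y • gradient φ y) x) ^ 2)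
          ≤ (Cinv * sSup (D '' Ωe e) / h e) *
            Real.sqrt (∫ x in Ωe e, ‖gradient φ x‖ ^ 2)) →
        (∀ e, Real.sqrt (∫ x in Ωe e, (vdiv (fun y => D y • gradient ψ y) x) ^ 2)
          ≤ (Cinv * sSup (D '' Ωe e) / h e) *
            Real.sqrt (∫ x in Ωe e, ‖gradient ψ x‖ ^ 2)) →
        (∫ x in Ω, (inner ℝ (u x) (gradient φ x) : ℝ) * ψ x)
          + π₁ * (∫ x in Ω, D x * (inner ℝ (gradient φ x) (gradient ψ x) : ℝ))
          + ε * (∫ x in Ω, φ x * ψ x)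
          + (∑ e, δ e * (∫ x in Ωe e,
              ((inner ℝ (u x) (gradient φ x) : ℝ) + ε * φ x
                - π₁ * vdiv (fun y => D y • gradient φ y) x)
              * (inner ℝ (u x) (gradient ψ x) : ℝ)))
        ≤ C * Real.sqrt (∫ x in Ω, ‖gradient φ x‖ ^ 2)
            * Real.sqrt (∫ x in Ω, ‖gradient ψ x‖ ^ 2) := by
  classical
  -- geometry of the box
  have hcomp : IsCompact Ω := by
    rw [hΩ]
    have he : {x : EuclideanSpace ℝ (Fin 2) | ∀ i, x i ∈ Set.Icc (a i) (b i)} =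
        (EuclideanSpace.equiv (Fin 2) ℝ).toHomeomorph ⁻¹'
          (Set.univ.pi fun i => Set.Icc (a i) (b i)) := by
      ext x; simp [Set.mem_pi, Pi.le_def, forall_and, WithLp.equiv]
    rw [he]
    exact (EuclideanSpace.equiv (Fin 2) ℝ).toHomeomorph.isCompact_preimage.mpr
      (isCompact_univ_pi fun i => isCompact_Icc)
  have hmΩ : MeasurableSet Ω := hcomp.isClosed.measurableSet
  have hsub : ∀ e, Ωe e ⊆ Ω := fun e => hcover ▸ Set.subset_iUnion Ωe e
  -- the sup of ‖u‖ and of D on Ω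
  have huc : ContinuousOn u Ω := hu.continuousOn.mono hΩU
  have hMuB : BddAbove ((fun x => ‖u x‖) '' Ω) := hcomp.bddAbove_image huc.norm
  have hMu0 : 0 ≤ sSup ((fun x => ‖u x‖) '' Ω) := by
    apply Real.sSup_nonneg
    rintro y ⟨x, hx, rfl⟩; exact norm_nonneg _
  have hMu : ∀ x ∈ Ω, ‖u x‖ ≤ sSup ((fun x => ‖u x‖) '' Ω) := fun x hx =>
    le_csSup hMuB ⟨x, hx, rfl⟩
  set Mu := sSup ((fun x => ‖u x‖) '' Ω) with hMudef
  have hDc : ContinuousOn D Ω := hD.continuous.continuousOn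
  have hMDB : BddAbove (D '' Ω) := hcomp.bddAbove_image hDc
  have hMD0 : 0 ≤ sSup (D '' Ω) := by
    apply Real.sSup_nonneg
    rintro y ⟨x, hx, rfl⟩; linarith [hD1 x hx]
  have hMD : ∀ x ∈ Ω, D x ≤ sSup (D '' Ω) := fun x hx => le_csSup hMDB ⟨x, hx, rfl⟩
  set MD := sSup (D '' Ω) with hMDdef
  have hK0 : ∀ e, 0 ≤ Cinv * sSup (D '' Ωe e) / h e := by
    intro e
    have hs : 0 ≤ sSup (D '' Ωe e) := by
      apply Real.sSup_nonneg
      rintro y ⟨x, hx, rfl⟩; linarith [hD1 x (hsub e hx)]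
    exact div_nonneg (mul_nonneg hCinv.le hs) (hh e).le
  refine ⟨Mu * Real.sqrt cΩ + π₁ * MD + ε * cΩ +
      ∑ e, δ e * (Mu * Mu + ε * Real.sqrt cΩ * Mu +
        π₁ * (Cinv * sSup (D '' Ωe e) / h e) * Mu), ?_, ?_⟩
  · have : ∀ e : Fin m, 0 ≤ δ e * (Mu * Mu + ε * Real.sqrt cΩ * Mu +
        π₁ * (Cinv * sSup (D '' Ωe e) / h e) * Mu) := fun e =>
      mul_nonneg (hδ0 e) (add_nonneg (add_nonneg (mul_nonneg hMu0 hMu0)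
        (mul_nonneg (mul_nonneg hε.le (Real.sqrt_nonneg _)) hMu0))
        (mul_nonneg (mul_nonneg hπ₁.le (hK0 e)) hMu0))
    have hs : 0 ≤ ∑ e, δ e * (Mu * Mu + ε * Real.sqrt cΩ * Mu +
        π₁ * (Cinv * sSup (D '' Ωe e) / h e) * Mu) :=
      Finset.sum_nonneg fun e _ => this e
    have t1 : 0 ≤ Mu * Real.sqrt cΩ := mul_nonneg hMu0 (Real.sqrt_nonneg _)
    have t2 : 0 ≤ π₁ * MD := mul_nonneg hπ₁.le hMD0
    have t3 : 0 ≤ ε * cΩ := mul_nonneg hε.le hcΩ.le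
    linarith
  intro φ ψ hφex hψex hPφ hPψ hIφ hIψ
  obtain ⟨V, hV, hΩV, hφ⟩ := hφex
  obtain ⟨W, hW, hΩW, hψ⟩ := hψex
  -- continuity of all the fields on Ω
  have hgφ1 : ContDiffOn ℝ 1 (gradient φ) V := supg_contDiffOn_gradient hV hφ
  have hgψ1 : ContDiffOn ℝ 1 (gradient ψ) W := supg_contDiffOn_gradient hW hψ
  have hgφc : ContinuousOn (gradient φ) Ω := hgφ1.continuousOn.mono hΩV
  have hgψc : ContinuousOn (gradient ψ) Ω := hgψ1.continuousOn.mono hΩW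
  have hφc : ContinuousOn φ Ω := hφ.continuousOn.mono hΩV
  have hψc : ContinuousOn ψ Ω := hψ.continuousOn.mono hΩW
  have hnφc : ContinuousOn (fun x => ‖gradient φ x‖) Ω := hgφc.norm
  have hnψc : ContinuousOn (fun x => ‖gradient ψ x‖) Ω := hgψc.norm
  have hAφc : ContinuousOn (fun x => (inner ℝ (u x) (gradient φ x) : ℝ)) Ω := huc.inner hgφc
  have hAψc : ContinuousOn (fun x => (inner ℝ (u x) (gradient ψ x) : ℝ)) Ω := huc.inner hgψc
  have hwφ : ContDiffOn ℝ 1 (fun y => D y • gradient φ y) V := (hD.contDiffOn).smul hgφ1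
  have hRφc : ContinuousOn (fun x => vdiv (fun y => D y • gradient φ y) x) Ω :=
    (supg_continuousOn_vdiv hV hwφ).mono hΩV
  -- integrability on Ω of continuous functions
  have cInt : ∀ {f : EuclideanSpace ℝ (Fin 2) → ℝ}, ContinuousOn f Ω → IntegrableOn f Ω :=
    fun hf => hf.integrableOn_compact hcomp
  -- MemLp facts
  have mφ : MemLp φ 2 (volume.restrict Ω) := supg_memL2 hcomp hmΩ hφc
  have mψ : MemLp ψ 2 (volume.restrict Ω) := supg_memL2 hcomp hmΩ hψc
  have mnφ : MemLp (fun x => ‖gradient φ x‖) 2 (volume.restrict Ω) :=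
    supg_memL2 hcomp hmΩ hnφc
  have mnψ : MemLp (fun x => ‖gradient ψ x‖) 2 (volume.restrict Ω) :=
    supg_memL2 hcomp hmΩ hnψc
  have mAφ : MemLp (fun x => (inner ℝ (u x) (gradient φ x) : ℝ)) 2 (volume.restrict Ω) :=
    supg_memL2 hcomp hmΩ hAφc
  have mAψ : MemLp (fun x => (inner ℝ (u x) (gradient ψ x) : ℝ)) 2 (volume.restrict Ω) :=
    supg_memL2 hcomp hmΩ hAψc
  have mRφ : MemLp (fun x => vdiv (fun y => D y • gradient φ y) x) 2 (volume.restrict Ω) :=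
    supg_memL2 hcomp hmΩ hRφc
  have hrle : ∀ e, volume.restrict (Ωe e) ≤ volume.restrict Ω := fun e =>
    Measure.restrict_mono (hsub e) le_rfl
  -- abbreviations
  set Gφ := Real.sqrt (∫ x in Ω, ‖gradient φ x‖ ^ 2) with hGφdef
  set Gψ := Real.sqrt (∫ x in Ω, ‖gradient ψ x‖ ^ 2) with hGψdef
  have hGφ0 : 0 ≤ Gφ := Real.sqrt_nonneg _
  have hGψ0 : 0 ≤ Gψ := Real.sqrt_nonneg _
  -- Poincaré consequences
  have f1φ : Real.sqrt (∫ x in Ω, φ x ^ 2) ≤ Real.sqrt cΩ * Gφ := by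
    have h1 := Real.sqrt_le_sqrt hPφ
    rwa [Real.sqrt_mul hcΩ.le] at h1
  have f1ψ : Real.sqrt (∫ x in Ω, ψ x ^ 2) ≤ Real.sqrt cΩ * Gψ := by
    have h1 := Real.sqrt_le_sqrt hPψ
    rwa [Real.sqrt_mul hcΩ.le] at h1
  -- |u ⋅ ∇| bounds
  have f2φ : Real.sqrt (∫ x in Ω, (inner ℝ (u x) (gradient φ x) : ℝ) ^ 2) ≤ Mu * Gφ := by
    refine supg_sqrt_int_le hmΩ hMu0 (cInt (hAφc.pow 2)) (cInt (hnφc.pow 2)) fun x hx => ?_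
    exact (abs_real_inner_le_norm _ _).trans
      (mul_le_mul_of_nonneg_right (hMu x hx) (norm_nonneg _))
  have f2ψ : Real.sqrt (∫ x in Ω, (inner ℝ (u x) (gradient ψ x) : ℝ) ^ 2) ≤ Mu * Gψ := by
    refine supg_sqrt_int_le hmΩ hMu0 (cInt (hAψc.pow 2)) (cInt (hnψc.pow 2)) fun x hx => ?_
    exact (abs_real_inner_le_norm _ _).trans
      (mul_le_mul_of_nonneg_right (hMu x hx) (norm_nonneg _))
  -- monotonicity in the domain
  have monAφ : ∀ e, Real.sqrt (∫ x in Ωe e, (inner ℝ (u x) (gradient φ x) : ℝ) ^ 2)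
      ≤ Real.sqrt (∫ x in Ω, (inner ℝ (u x) (gradient φ x) : ℝ) ^ 2) := fun e =>
    supg_sqrt_int_mono (hsub e) (cInt (hAφc.pow 2))
  have monAψ : ∀ e, Real.sqrt (∫ x in Ωe e, (inner ℝ (u x) (gradient ψ x) : ℝ) ^ 2)
      ≤ Real.sqrt (∫ x in Ω, (inner ℝ (u x) (gradient ψ x) : ℝ) ^ 2) := fun e =>
    supg_sqrt_int_mono (hsub e) (cInt (hAψc.pow 2))
  have monφ : ∀ e, Real.sqrt (∫ x in Ωe e, φ x ^ 2) ≤ Real.sqrt (∫ x in Ω, φ x ^ 2) :=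
    fun e => supg_sqrt_int_mono (hsub e) (cInt (hφc.pow 2))
  have monnφ : ∀ e, Real.sqrt (∫ x in Ωe e, ‖gradient φ x‖ ^ 2) ≤ Gφ :=
    fun e => supg_sqrt_int_mono (hsub e) (cInt (hnφc.pow 2))
  -- Term 1
  have h1 : (∫ x in Ω, (inner ℝ (u x) (gradient φ x) : ℝ) * ψ x)
      ≤ Mu * Real.sqrt cΩ * (Gφ * Gψ) := by
    have c1 := supg_cs2 mAφ mψ (cInt (hAφc.mul hψc))
    have c2 : Real.sqrt (∫ x in Ω, (inner ℝ (u x) (gradient φ x) : ℝ) ^ 2) *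
        Real.sqrt (∫ x in Ω, ψ x ^ 2) ≤ (Mu * Gφ) * (Real.sqrt cΩ * Gψ) :=
      mul_le_mul f2φ f1ψ (Real.sqrt_nonneg _) (mul_nonneg hMu0 hGφ0)
    calc (∫ x in Ω, (inner ℝ (u x) (gradient φ x) : ℝ) * ψ x)
        ≤ _ := c1
      _ ≤ (Mu * Gφ) * (Real.sqrt cΩ * Gψ) := c2
      _ = Mu * Real.sqrt cΩ * (Gφ * Gψ) := by ring
  -- Term 2
  have h2 : (∫ x in Ω, D x * (inner ℝ (gradient φ x) (gradient ψ x) : ℝ))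
      ≤ MD * (Gφ * Gψ) := by
    have step1 : (∫ x in Ω, D x * (inner ℝ (gradient φ x) (gradient ψ x) : ℝ))
        ≤ ∫ x in Ω, MD * (‖gradient φ x‖ * ‖gradient ψ x‖) := by
      refine setIntegral_mono_on (cInt (hDc.mul (hgφc.inner hgψc)))
        ((cInt (hnφc.mul hnψc)).const_mul MD) hmΩ fun x hx => ?_
      have hi := real_inner_le_norm (gradient φ x) (gradient ψ x)
      have hD0x : (0:ℝ) ≤ D x := le_trans zero_le_one (hD1 x hx)
      calc D x * (inner ℝ (gradient φ x) (gradient ψ x) : ℝ)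
          ≤ D x * (‖gradient φ x‖ * ‖gradient ψ x‖) := mul_le_mul_of_nonneg_left hi hD0x
        _ ≤ MD * (‖gradient φ x‖ * ‖gradient ψ x‖) :=
          mul_le_mul_of_nonneg_right (hMD x hx)
            (mul_nonneg (norm_nonneg _) (norm_nonneg _))
    have step2 : (∫ x in Ω, ‖gradient φ x‖ * ‖gradient ψ x‖) ≤ Gφ * Gψ :=
      supg_cs2 mnφ mnψ (cInt (hnφc.mul hnψc))
    calc (∫ x in Ω, D x * (inner ℝ (gradient φ x) (gradient ψ x) : ℝ))
        ≤ ∫ x in Ω, MD * (‖gradient φ x‖ * ‖gradient ψ x‖) := step1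
      _ = MD * ∫ x in Ω, ‖gradient φ x‖ * ‖gradient ψ x‖ := integral_const_mul _ _
      _ ≤ MD * (Gφ * Gψ) := mul_le_mul_of_nonneg_left step2 hMD0
  -- Term 3
  have h3 : (∫ x in Ω, φ x * ψ x) ≤ cΩ * (Gφ * Gψ) := by
    have c1 := supg_cs2 mφ mψ (cInt (hφc.mul hψc))
    have c2 : Real.sqrt (∫ x in Ω, φ x ^ 2) * Real.sqrt (∫ x in Ω, ψ x ^ 2)
        ≤ (Real.sqrt cΩ * Gφ) * (Real.sqrt cΩ * Gψ) :=
      mul_le_mul f1φ f1ψ (Real.sqrt_nonneg _) (mul_nonneg (Real.sqrt_nonneg _) hGφ0)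
    have c3 : (Real.sqrt cΩ * Gφ) * (Real.sqrt cΩ * Gψ) = cΩ * (Gφ * Gψ) := by
      rw [show (Real.sqrt cΩ * Gφ) * (Real.sqrt cΩ * Gψ)
          = (Real.sqrt cΩ * Real.sqrt cΩ) * (Gφ * Gψ) by ring,
        Real.mul_self_sqrt hcΩ.le]
    exact c1.trans (c2.trans_eq c3)
  -- SUPG terms
  have h4 : ∀ e, (∫ x in Ωe e,
        ((inner ℝ (u x) (gradient φ x) : ℝ) + ε * φ x
          - π₁ * vdiv (fun y => D y • gradient φ y) x)
        * (inner ℝ (u x) (gradient ψ x) : ℝ))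
      ≤ (Mu * Mu + ε * Real.sqrt cΩ * Mu +
          π₁ * (Cinv * sSup (D '' Ωe e) / h e) * Mu) * (Gφ * Gψ) := by
    intro e
    -- restricted MemLp
    have mAφe := mAφ.mono_measure (hrle e)
    have mAψe := mAψ.mono_measure (hrle e)
    have mφe := mφ.mono_measure (hrle e)
    have mRφe := mRφ.mono_measure (hrle e)
    -- integrability of the products on Ωe e
    have i1 : IntegrableOn (fun x => (inner ℝ (u x) (gradient φ x) : ℝ) *
        (inner ℝ (u x) (gradient ψ x) : ℝ)) (Ωe e) :=
      (cInt (hAφc.mul hAψc)).mono_set (hsub e)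
    have i2' : IntegrableOn (fun x => φ x * (inner ℝ (u x) (gradient ψ x) : ℝ)) (Ωe e) :=
      (cInt (hφc.mul hAψc)).mono_set (hsub e)
    have i3' : IntegrableOn (fun x => (-(vdiv (fun y => D y • gradient φ y) x)) *
        (inner ℝ (u x) (gradient ψ x) : ℝ)) (Ωe e) :=
      (cInt (hRφc.neg.mul hAψc)).mono_set (hsub e)
    have i2 : IntegrableOn (fun x => ε * (φ x * (inner ℝ (u x) (gradient ψ x) : ℝ))) (Ωe e) :=
      i2'.const_mul ε
    have i3 : IntegrableOn (fun x => π₁ * ((-(vdiv (fun y => D y • gradient φ y) x)) *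
        (inner ℝ (u x) (gradient ψ x) : ℝ))) (Ωe e) := i3'.const_mul π₁
    -- split the integral
    have hsplit : (∫ x in Ωe e,
          ((inner ℝ (u x) (gradient φ x) : ℝ) + ε * φ x
            - π₁ * vdiv (fun y => D y • gradient φ y) x)
          * (inner ℝ (u x) (gradient ψ x) : ℝ))
        = (∫ x in Ωe e, (inner ℝ (u x) (gradient φ x) : ℝ) *
            (inner ℝ (u x) (gradient ψ x) : ℝ))
          + ε * (∫ x in Ωe e, φ x * (inner ℝ (u x) (gradient ψ x) : ℝ))
          + π₁ * (∫ x in Ωe e, (-(vdiv (fun y => D y • gradient φ y) x)) *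
              (inner ℝ (u x) (gradient ψ x) : ℝ)) := by
      have i23 : IntegrableOn (fun x => ε * (φ x * (inner ℝ (u x) (gradient ψ x) : ℝ))
          + π₁ * ((-(vdiv (fun y => D y • gradient φ y) x)) *
            (inner ℝ (u x) (gradient ψ x) : ℝ))) (Ωe e) := i2.add i3
      have hstep : (∫ x in Ωe e,
            ((inner ℝ (u x) (gradient φ x) : ℝ) + ε * φ x
              - π₁ * vdiv (fun y => D y • gradient φ y) x)
            * (inner ℝ (u x) (gradient ψ x) : ℝ))
          = ∫ x in Ωe e, ((inner ℝ (u x) (gradient φ x) : ℝ) *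
              (inner ℝ (u x) (gradient ψ x) : ℝ)
            + (ε * (φ x * (inner ℝ (u x) (gradient ψ x) : ℝ))
              + π₁ * ((-(vdiv (fun y => D y • gradient φ y) x)) *
                (inner ℝ (u x) (gradient ψ x) : ℝ)))) :=
        integral_congr_ae (Filter.Eventually.of_forall fun x => by ring)
      rw [hstep, integral_add i1 i23, integral_add i2 i3,
        integral_const_mul, integral_const_mul]
      ring
    -- bounds on the three pieces
    have bAψ : Real.sqrt (∫ x in Ωe e, (inner ℝ (u x) (gradient ψ x) : ℝ) ^ 2) ≤ Mu * Gψ :=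
      (monAψ e).trans f2ψ
    have b1 : (∫ x in Ωe e, (inner ℝ (u x) (gradient φ x) : ℝ) *
        (inner ℝ (u x) (gradient ψ x) : ℝ)) ≤ (Mu * Gφ) * (Mu * Gψ) := by
      refine (supg_cs2 mAφe mAψe i1).trans ?_
      exact mul_le_mul ((monAφ e).trans f2φ) bAψ (Real.sqrt_nonneg _)
        (mul_nonneg hMu0 hGφ0)
    have b2 : (∫ x in Ωe e, φ x * (inner ℝ (u x) (gradient ψ x) : ℝ))
        ≤ (Real.sqrt cΩ * Gφ) * (Mu * Gψ) := by
      refine (supg_cs2 mφe mAψe i2').trans ?_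
      exact mul_le_mul ((monφ e).trans f1φ) bAψ (Real.sqrt_nonneg _)
        (mul_nonneg (Real.sqrt_nonneg _) hGφ0)
    have b3 : (∫ x in Ωe e, (-(vdiv (fun y => D y • gradient φ y) x)) *
        (inner ℝ (u x) (gradient ψ x) : ℝ))
        ≤ ((Cinv * sSup (D '' Ωe e) / h e) * Gφ) * (Mu * Gψ) := by
      have mneg : MemLp (fun x => -(vdiv (fun y => D y • gradient φ y) x)) 2
          (volume.restrict (Ωe e)) := mRφe.neg
      have c1 := supg_cs2 mneg mAψe i3'
      have e1 : (∫ x in Ωe e, (-(vdiv (fun y => D y • gradient φ y) x)) ^ 2)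
          = ∫ x in Ωe e, (vdiv (fun y => D y • gradient φ y) x) ^ 2 := by
        refine integral_congr_ae (Filter.Eventually.of_forall fun x => ?_)
        ring
      rw [e1] at c1
      refine c1.trans ?_
      have hRb : Real.sqrt (∫ x in Ωe e, (vdiv (fun y => D y • gradient φ y) x) ^ 2)
          ≤ (Cinv * sSup (D '' Ωe e) / h e) * Gφ :=
        (hIφ e).trans (mul_le_mul_of_nonneg_left (monnφ e) (hK0 e))
      exact mul_le_mul hRb bAψ (Real.sqrt_nonneg _)
        (mul_nonneg (hK0 e) hGφ0)
    calc (∫ x in Ωe e,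
          ((inner ℝ (u x) (gradient φ x) : ℝ) + ε * φ x
            - π₁ * vdiv (fun y => D y • gradient φ y) x)
          * (inner ℝ (u x) (gradient ψ x) : ℝ))
        = _ := hsplit
      _ ≤ (Mu * Gφ) * (Mu * Gψ) + ε * ((Real.sqrt cΩ * Gφ) * (Mu * Gψ))
          + π₁ * (((Cinv * sSup (D '' Ωe e) / h e) * Gφ) * (Mu * Gψ)) := by
        exact add_le_add (add_le_add b1 (mul_le_mul_of_nonneg_left b2 hε.le))
          (mul_le_mul_of_nonneg_left b3 hπ₁.le)
      _ = (Mu * Mu + ε * Real.sqrt cΩ * Mu +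
          π₁ * (Cinv * sSup (D '' Ωe e) / h e) * Mu) * (Gφ * Gψ) := by ring
  -- assemble
  have hsum : (∑ e, δ e * (∫ x in Ωe e,
        ((inner ℝ (u x) (gradient φ x) : ℝ) + ε * φ x
          - π₁ * vdiv (fun y => D y • gradient φ y) x)
        * (inner ℝ (u x) (gradient ψ x) : ℝ)))
      ≤ (∑ e, δ e * (Mu * Mu + ε * Real.sqrt cΩ * Mu +
          π₁ * (Cinv * sSup (D '' Ωe e) / h e) * Mu)) * (Gφ * Gψ) := by
    rw [Finset.sum_mul]
    refine Finset.sum_le_sum fun e _ => ?_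
    calc δ e * _ ≤ δ e * ((Mu * Mu + ε * Real.sqrt cΩ * Mu +
          π₁ * (Cinv * sSup (D '' Ωe e) / h e) * Mu) * (Gφ * Gψ)) :=
      mul_le_mul_of_nonneg_left (h4 e) (hδ0 e)
    _ = δ e * (Mu * Mu + ε * Real.sqrt cΩ * Mu +
          π₁ * (Cinv * sSup (D '' Ωe e) / h e) * Mu) * (Gφ * Gψ) := by ring
  calc (∫ x in Ω, (inner ℝ (u x) (gradient φ x) : ℝ) * ψ x)
          + π₁ * (∫ x in Ω, D x * (inner ℝ (gradient φ x) (gradient ψ x) : ℝ))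
          + ε * (∫ x in Ω, φ x * ψ x)
          + (∑ e, δ e * (∫ x in Ωe e,
              ((inner ℝ (u x) (gradient φ x) : ℝ) + ε * φ x
                - π₁ * vdiv (fun y => D y • gradient φ y) x)
              * (inner ℝ (u x) (gradient ψ x) : ℝ)))
      ≤ Mu * Real.sqrt cΩ * (Gφ * Gψ) + π₁ * (MD * (Gφ * Gψ)) + ε * (cΩ * (Gφ * Gψ))
          + (∑ e, δ e * (Mu * Mu + ε * Real.sqrt cΩ * Mu +
              π₁ * (Cinv * sSup (D '' Ωe e) / h e) * Mu)) * (Gφ * Gψ) := by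
        exact add_le_add (add_le_add (add_le_add h1
          (mul_le_mul_of_nonneg_left h2 hπ₁.le))
          (mul_le_mul_of_nonneg_left h3 hε.le)) hsum
    _ = (Mu * Real.sqrt cΩ + π₁ * MD + ε * cΩ +
          ∑ e, δ e * (Mu * Mu + ε * Real.sqrt cΩ * Mu +
            π₁ * (Cinv * sSup (D '' Ωe e) / h e) * Mu)) * Gφ * Gψ := by ring
end

section
/- Let n ≥ 1, let N be a real n×n matrix with xᵀNx > 0 for every nonzero x ∈ ℝⁿ, and let z ∈ ℝⁿ be nonzero. Then for every b ∈ ℝⁿ and every c ∈ ℝ there exist a unique φ ∈ ℝⁿ and a unique λ ∈ ℝ such that Nφ + λz = b and zᵀφ = c; in particular the constrained discrete nanoparticle system Nφ + λz = b, zᵀφ = 1 has exactly one solution (φ, λ). -/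
open Matrix

/-- With `xᵀNx > 0` for nonzero `x` and `z ≠ 0`, for every `b` and `c`
there is a unique pair `(φ, λ)` with `Nφ + λz = b` and `zᵀφ = c`; in particular the
constrained system with `zᵀφ = 1` has exactly one solution. -/
theorem stmt6 (n : ℕ) (hn : 1 ≤ n) (N : Matrix (Fin n) (Fin n) ℝ)
    (hN : ∀ x : Fin n → ℝ, x ≠ 0 → 0 < x ⬝ᵥ N.mulVec x)
    (z : Fin n → ℝ) (hz : z ≠ 0) :
    (∀ (b : Fin n → ℝ) (c : ℝ), ∃! p : (Fin n → ℝ) × ℝ,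
        N.mulVec p.1 + p.2 • z = b ∧ z ⬝ᵥ p.1 = c) ∧
    (∀ b : Fin n → ℝ, ∃! p : (Fin n → ℝ) × ℝ,
        N.mulVec p.1 + p.2 • z = b ∧ z ⬝ᵥ p.1 = 1) := by
  -- The bordered linear map
  set T : ((Fin n → ℝ) × ℝ) →ₗ[ℝ] ((Fin n → ℝ) × ℝ) :=
    { toFun := fun p => (N.mulVec p.1 + p.2 • z, z ⬝ᵥ p.1)
      map_add' := by
        intro p q
        simp [Matrix.mulVec_add, dotProduct_add, add_smul, Prod.ext_iff]
        abel
      map_smul' := by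
        intro c p
        simp [Matrix.mulVec_smul, dotProduct_smul, smul_add, smul_smul,
          Prod.ext_iff, smul_eq_mul, mul_comm] } with hT
  have hinj : Function.Injective T := by
    rw [← LinearMap.ker_eq_bot, LinearMap.ker_eq_bot']
    intro p hp
    have h1 : N.mulVec p.1 + p.2 • z = 0 := congrArg Prod.fst hp
    have h2 : z ⬝ᵥ p.1 = 0 := congrArg Prod.snd hp
    have hq : p.1 ⬝ᵥ N.mulVec p.1 = 0 := by
      have := congrArg (fun v => p.1 ⬝ᵥ v) h1
      simp only [dotProduct_add, dotProduct_smul, dotProduct_zero,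
        smul_eq_mul] at this
      rw [dotProduct_comm p.1 z, h2, mul_zero, add_zero] at this
      exact this
    have hx1 : p.1 = 0 := by
      by_contra h
      exact absurd hq (ne_of_gt (hN p.1 h))
    have hx2 : p.2 = 0 := by
      rw [hx1, Matrix.mulVec_zero, zero_add] at h1
      rcases smul_eq_zero.mp h1 with h | h
      · exact h
      · exact absurd h hz
    exact Prod.ext hx1 hx2
  have hsurj : Function.Surjective T :=
    (LinearMap.injective_iff_surjective (f := T)).mp hinj
  have key : ∀ (b : Fin n → ℝ) (c : ℝ), ∃! p : (Fin n → ℝ) × ℝ,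
      N.mulVec p.1 + p.2 • z = b ∧ z ⬝ᵥ p.1 = c := by
    intro b c
    obtain ⟨p, hp⟩ := hsurj (b, c)
    refine ⟨p, ⟨congrArg Prod.fst hp, congrArg Prod.snd hp⟩, ?_⟩
    intro q hq
    apply hinj
    rw [hp]
    exact Prod.ext hq.1 hq.2
  exact ⟨key, fun b => key b 1⟩
end
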